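/- arXiv:1710.06199 — 5 statements merged into one kernel-verified Lean document; each statement's English description precedes it below -/
import Mathlib

section
/- (Lemma B.3(b), erasing neighbouring points, stated for a fixed representation) Let A be a unital C*-algebra and u_{ij} ∈ A (1 ≤ i,j ≤ n) be self-adjoint, satisfying Σ_{m=1}^n u_{im}u_{jm} = δ_{ij}·1 and Σ_{m=1}^n u_{mi}u_{mj} = δ_{ij}·1 for all i,j. Let p ∈ P(k,l) with l ≥ 2 and 1 ≤ j ≤ l-1, and suppose the relations R(p) hold for the u_{ij}. Then the relations R(p') hold, where p' ∈ P(k, l-2) is obtained from p by first connecting (merging) the blocks containing the j-th and the (j+1)-th lower points, and then erasing these two points. -/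
open scoped Classical

namespace PartitionCstar

/-- A partition in `P(k,l)`: an equivalence relation (whose classes are the blocks)
on the disjoint union of `k` upper points and `l` lower points. -/
abbrev Partition (k l : ℕ) := Setoid (Fin k ⊕ Fin l)

/-- `labelsMatch p α β` holds iff, labelling the upper points by `α` and the lower points
by `β`, the strings (blocks) of `p` connect only equal indices. -/
def labelsMatch {n k l : ℕ} (p : Partition k l) (α : Fin k → Fin n) (β : Fin l → Fin n) :
    Prop :=
  ∀ x y : Fin k ⊕ Fin l, p.r x y → Sum.elim α β x = Sum.elim α β y

/-- The delta function `δ_p(α,β) ∈ {0,1}`. -/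
noncomputable def delta {n k l : ℕ} (p : Partition k l) (α : Fin k → Fin n)
    (β : Fin l → Fin n) : ℕ :=
  if labelsMatch p α β then 1 else 0

/-- The relations `R(p)` for a matrix of elements `u` of a unital ring:
`∑_γ δ_p(γ,β) u_{γ₁α₁}⋯u_{γₖαₖ} = ∑_{γ'} δ_p(α,γ') u_{β₁γ'₁}⋯u_{β_lγ'_l}`.
(For `k = 0` resp. `l = 0` the empty product is `1`, which yields the conventions
`δ_p(∅,β)·1` resp. `δ_p(α,∅)·1`.) -/
def SatisfiesRel {A : Type*} [Ring A] {n : ℕ} (u : Fin n → Fin n → A)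
    {k l : ℕ} (p : Partition k l) : Prop :=
  ∀ (α : Fin k → Fin n) (β : Fin l → Fin n),
    (∑ γ : Fin k → Fin n,
      if labelsMatch p γ β then (List.ofFn fun s => u (γ s) (α s)).prod else 0)
    = ∑ γ' : Fin l → Fin n,
      if labelsMatch p α γ' then (List.ofFn fun t => u (β t) (γ' t)).prod else 0

/-- The disjoint union of two set partitions. -/
def sumPartition {X Y : Type*} (p : Setoid X) (q : Setoid Y) : Setoid (X ⊕ Y) where
  r := Sum.LiftRel p.r q.r
  iseqv := by
    refine ⟨fun a => ?_, fun {a b} h => ?_, fun {a b c} h₁ h₂ => ?_⟩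
    · cases a with
      | inl x => exact Sum.LiftRel.inl (p.iseqv.refl x)
      | inr y => exact Sum.LiftRel.inr (q.iseqv.refl y)
    · cases h with
      | inl h => exact Sum.LiftRel.inl (p.iseqv.symm h)
      | inr h => exact Sum.LiftRel.inr (q.iseqv.symm h)
    · cases h₁ with
      | inl h₁ =>
        cases h₂ with
        | inl h₂ => exact Sum.LiftRel.inl (p.iseqv.trans h₁ h₂)
      | inr h₁ =>
        cases h₂ with
        | inr h₂ => exact Sum.LiftRel.inr (q.iseqv.trans h₁ h₂)

/-- Reindexing equivalence for the tensor product of partitions. -/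
def tensorEquiv (k l k' l' : ℕ) :
    (Fin (k + k') ⊕ Fin (l + l')) ≃ ((Fin k ⊕ Fin l) ⊕ (Fin k' ⊕ Fin l')) :=
  (Equiv.sumCongr finSumFinEquiv.symm finSumFinEquiv.symm).trans
    (Equiv.sumSumSumComm (Fin k) (Fin k') (Fin l) (Fin l'))

/-- The tensor product `p ⊗ q` of two partitions: horizontal concatenation,
blocks kept separate. -/
def tensor {k l k' l' : ℕ} (p : Partition k l) (q : Partition k' l') :
    Partition (k + k') (l + l') :=
  Setoid.comap (tensorEquiv k l k' l') (sumPartition p q)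

/-- The join of `p ∈ P(k,l)` and `q ∈ P(l,m)` on the `k` upper, `l` middle and
`m` lower points, identifying the lower points of `p` with the upper points of `q`. -/
def compJoin {k l m : ℕ} (q : Partition l m) (p : Partition k l) :
    Setoid (Fin k ⊕ (Fin l ⊕ Fin m)) :=
  (Setoid.comap (Equiv.sumAssoc (Fin k) (Fin l) (Fin m)).symm
      (sumPartition p (⊥ : Setoid (Fin m))))
    ⊔ sumPartition (⊥ : Setoid (Fin k)) q

/-- The composition `qp ∈ P(k,m)` of `q ∈ P(l,m)` below `p ∈ P(k,l)`: restriction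
of the join to the upper and lower points. -/
def comp {k l m : ℕ} (q : Partition l m) (p : Partition k l) : Partition k m :=
  Setoid.comap (Sum.map id Sum.inr : Fin k ⊕ Fin m → Fin k ⊕ (Fin l ⊕ Fin m))
    (compJoin q p)

/-- Middle points in the composition procedure. -/
def IsMiddle {k l m : ℕ} : Fin k ⊕ (Fin l ⊕ Fin m) → Prop
  | Sum.inr (Sum.inl _) => True
  | _ => False

/-- `rl q p`: the number of removed loops in the composition of `q` and `p`, i.e. the
number of blocks of the join consisting entirely of middle points. -/
noncomputable def rl {k l m : ℕ} (q : Partition l m) (p : Partition k l) : ℕ :=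
  Nat.card {c : Quotient (compJoin q p) //
    ∀ x : Fin k ⊕ (Fin l ⊕ Fin m), Quotient.mk (compJoin q p) x = c → IsMiddle x}

/-- The involution `p* ∈ P(l,k)`: turning `p ∈ P(k,l)` upside down. -/
def involution {k l : ℕ} (p : Partition k l) : Partition l k :=
  Setoid.comap (Equiv.sumComm (Fin l) (Fin k)) p

/-- The vertical reflection `p̃ ∈ P(k,l)`: reflecting `p` at the vertical axis. -/
def reflect {k l : ℕ} (p : Partition k l) : Partition k l :=
  Setoid.comap (Sum.map Fin.rev Fin.rev) p

/-- The setoid relating `x` and `y` (and nothing else besides equality). -/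
def pairSetoid {X : Type*} (x y : X) : Setoid X where
  r a b := a = b ∨ (a = x ∧ b = y) ∨ (a = y ∧ b = x)
  iseqv := by
    refine ⟨fun a => Or.inl rfl, fun {a b} h => ?_, fun {a b c} h₁ h₂ => ?_⟩
    · rcases h with rfl | ⟨ha, hb⟩ | ⟨ha, hb⟩
      · exact Or.inl rfl
      · exact Or.inr (Or.inr ⟨hb, ha⟩)
      · exact Or.inr (Or.inl ⟨hb, ha⟩)
    · rcases h₁ with rfl | h₁
      · exact h₂
      · rcases h₂ with rfl | h₂
        · exact Or.inr h₁
        · rcases h₁ with ⟨ha, hb⟩ | ⟨ha, hb⟩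
          · rcases h₂ with ⟨hb', hc⟩ | ⟨hb', hc⟩
            · exact Or.inr (Or.inl ⟨ha, hc⟩)
            · exact Or.inl (ha.trans hc.symm)
          · rcases h₂ with ⟨hb', hc⟩ | ⟨hb', hc⟩
            · exact Or.inl (ha.trans hc.symm)
            · exact Or.inr (Or.inr ⟨ha, hc⟩)

/-- Connecting (merging) the blocks of the points `x` and `y` of a partition. -/
def mergeBlocks {X : Type*} (p : Setoid X) (x y : X) : Setoid X :=
  p ⊔ pairSetoid x y

/-- Disconnecting the point `x` from its block and turning it into a singleton block. -/
def disconnect {X : Type*} (p : Setoid X) (x : X) : Setoid X where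
  r a b := a = b ∨ (p.r a b ∧ a ≠ x ∧ b ≠ x)
  iseqv := by
    refine ⟨fun a => Or.inl rfl, fun {a b} h => ?_, fun {a b c} h₁ h₂ => ?_⟩
    · rcases h with rfl | ⟨h, ha, hb⟩
      · exact Or.inl rfl
      · exact Or.inr ⟨p.iseqv.symm h, hb, ha⟩
    · rcases h₁ with rfl | ⟨h₁, ha, hb⟩
      · exact h₂
      · rcases h₂ with rfl | ⟨h₂, hb', hc⟩
        · exact Or.inr ⟨h₁, ha, hb⟩
        · exact Or.inr ⟨p.iseqv.trans h₁ h₂, ha, hc⟩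

/-- The partition of the lower points induced by `p ∈ P(0,l)`. -/
def lowerSetoid {l : ℕ} (p : Partition 0 l) : Setoid (Fin l) :=
  Setoid.comap Sum.inr p

/-- The reindexing map for inserting `m` points after position `t` among `l` points. -/
def insertMap (l m t : ℕ) (ht : t ≤ l) : Fin (l + m) → Fin l ⊕ Fin m := fun i =>
  if h1 : (i : ℕ) < t then Sum.inl ⟨i, lt_of_lt_of_le h1 ht⟩
  else if h2 : (i : ℕ) < t + m then Sum.inr ⟨(i : ℕ) - t, by omega⟩
  else Sum.inl ⟨(i : ℕ) - m, by have := i.isLt; omega⟩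

/-- The partition in `P(0, l+m)` obtained from `p ∈ P(0,l)` by inserting `q ∈ P(0,m)`
after the `t`-th lower point of `p` (blocks of `p` and `q` kept separate). -/
def insertAt {l m : ℕ} (p : Partition 0 l) (q : Partition 0 m) (t : ℕ) (ht : t ≤ l) :
    Partition 0 (l + m) :=
  Setoid.comap (Sum.elim (fun a : Fin 0 => a.elim0) (insertMap l m t ht))
    (sumPartition (lowerSetoid p) (lowerSetoid q))

/-- The reindexing map for the rotation moving the leftmost upper point to the
leftmost lower position. -/
def rotateMap (k l : ℕ) : Fin k ⊕ Fin (l + 1) → Fin (k + 1) ⊕ Fin l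
  | Sum.inl a => Sum.inl a.succ
  | Sum.inr b => Fin.cases (Sum.inl (0 : Fin (k + 1))) (fun b' => Sum.inr b') b

/-- The rotated version of `p ∈ P(k+1, l)`: the leftmost upper point becomes the new
leftmost lower point (staying in its block). -/
def rotate {k l : ℕ} (p : Partition (k + 1) l) : Partition k (l + 1) :=
  Setoid.comap (rotateMap k l) p

/-- The embedding of the remaining points after erasing the lower points `j` and `j+1`. -/
def eraseMap (k l j : ℕ) : Fin k ⊕ Fin l → Fin k ⊕ Fin (l + 2) :=
  Sum.map id fun b =>
    if (b : ℕ) < j then ⟨(b : ℕ), by have := b.isLt; omega⟩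
    else ⟨(b : ℕ) + 2, by have := b.isLt; omega⟩

/-- The partition in `P(k,l)` obtained from `p ∈ P(k,l+2)` by connecting the blocks of
the `j`-th and `(j+1)`-th lower points and then erasing those two points. -/
def erasePair {k l : ℕ} (p : Partition k (l + 2)) (j : Fin (l + 1)) : Partition k l :=
  Setoid.comap (eraseMap k l j)
    (mergeBlocks p (Sum.inr ⟨(j : ℕ), by have := j.isLt; omega⟩)
      (Sum.inr ⟨(j : ℕ) + 1, by have := j.isLt; omega⟩))

/-- The non-unital relations `R(p)` relative to a projection `P₀`:
`P₀·∑_γ δ_p(γ,β) u_{γ₁α₁}⋯u_{γₖαₖ} = (∑_{γ'} δ_p(α,γ') u_{β₁γ'₁}⋯u_{β_lγ'_l})·P₀`,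
with the conventions `δ_p(∅,β)·P₀` resp. `δ_p(α,∅)·P₀` for `k = 0` resp. `l = 0`. -/
def SatisfiesRelNU {A : Type*} [NonUnitalRing A] {n : ℕ} (P₀ : A)
    (u : Fin n → Fin n → A) {k l : ℕ} (p : Partition k l) : Prop :=
  ∀ (α : Fin k → Fin n) (β : Fin l → Fin n),
    (∑ γ : Fin k → Fin n,
      if labelsMatch p γ β then
        (List.ofFn fun s => u (γ s) (α s)).foldl (· * ·) P₀ else 0)
    = ∑ γ' : Fin l → Fin n,
      if labelsMatch p α γ' then
        (List.ofFn fun t => u (β t) (γ' t)).foldr (· * ·) P₀ else 0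

section EraseAux

variable {n k l : ℕ}

/-- insertion of two values at positions `j`, `j+1` among `l` lower labels. -/
def ins (l : ℕ) (j : Fin (l + 1)) {n : ℕ} (β : Fin l → Fin n) (c d : Fin n) :
    Fin (l + 2) → Fin n := fun t =>
  if h1 : (t : ℕ) < (j : ℕ) then β ⟨t, by have := j.isLt; omega⟩
  else if h2 : (t : ℕ) = (j : ℕ) then c
  else if h3 : (t : ℕ) = (j : ℕ) + 1 then d
  else β ⟨(t : ℕ) - 2, by have := t.isLt; omega⟩

lemma ins_lt {j : Fin (l + 1)} (β : Fin l → Fin n) (c d : Fin n) {t : Fin (l + 2)}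
    (h : (t : ℕ) < (j : ℕ)) :
    ins l j β c d t = β ⟨t, by have := j.isLt; omega⟩ := by
  unfold ins; split_ifs <;> first | rfl | (exfalso; omega)

lemma ins_j {j : Fin (l + 1)} (β : Fin l → Fin n) (c d : Fin n) {t : Fin (l + 2)}
    (h : (t : ℕ) = (j : ℕ)) :
    ins l j β c d t = c := by
  unfold ins; split_ifs <;> first | rfl | (exfalso; omega)

lemma ins_j1 {j : Fin (l + 1)} (β : Fin l → Fin n) (c d : Fin n) {t : Fin (l + 2)}
    (h : (t : ℕ) = (j : ℕ) + 1) :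
    ins l j β c d t = d := by
  unfold ins; split_ifs <;> first | rfl | (exfalso; omega)

lemma ins_ge {j : Fin (l + 1)} (β : Fin l → Fin n) (c d : Fin n) {t : Fin (l + 2)}
    (h : (j : ℕ) + 2 ≤ (t : ℕ)) :
    ins l j β c d t = β ⟨(t : ℕ) - 2, by have := t.isLt; omega⟩ := by
  unfold ins; split_ifs <;> first | rfl | (exfalso; omega)

/-- The `j`-th lower point as an element of `Fin k ⊕ Fin (l+2)`. -/
def ptx (k l : ℕ) (j : Fin (l + 1)) : Fin k ⊕ Fin (l + 2) :=
  Sum.inr ⟨(j : ℕ), by have := j.isLt; omega⟩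

/-- The `(j+1)`-th lower point as an element of `Fin k ⊕ Fin (l+2)`. -/
def pty (k l : ℕ) (j : Fin (l + 1)) : Fin k ⊕ Fin (l + 2) :=
  Sum.inr ⟨(j : ℕ) + 1, by have := j.isLt; omega⟩

lemma elim_ins_eraseMap (j : Fin (l + 1)) (υ : Fin k → Fin n) (β : Fin l → Fin n)
    (c d : Fin n) (w : Fin k ⊕ Fin l) :
    Sum.elim υ (ins l j β c d) (eraseMap k l (j : ℕ) w) = Sum.elim υ β w := by
  cases w with
  | inl a => rfl
  | inr b =>
    simp only [eraseMap, Sum.map_inr, Sum.elim_inr]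
    split_ifs with hb
    · rw [ins_lt β c d (t := ⟨(b : ℕ), by have := b.isLt; omega⟩) hb]
    · rw [ins_ge β c d (t := ⟨(b : ℕ) + 2, by have := b.isLt; omega⟩)
        (show (j : ℕ) + 2 ≤ (b : ℕ) + 2 by omega)]
      exact congrArg β (Fin.ext (show (b : ℕ) + 2 - 2 = (b : ℕ) by omega))

lemma erase_surj (j : Fin (l + 1)) (z : Fin k ⊕ Fin (l + 2))
    (hx : z ≠ ptx k l j) (hy : z ≠ pty k l j) :
    ∃ w, eraseMap k l (j : ℕ) w = z := by
  cases z with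
  | inl a => exact ⟨Sum.inl a, rfl⟩
  | inr b =>
    have hb1 : (b : ℕ) ≠ (j : ℕ) := fun h => hx (congrArg Sum.inr (Fin.ext h))
    have hb2 : (b : ℕ) ≠ (j : ℕ) + 1 := fun h => hy (congrArg Sum.inr (Fin.ext h))
    by_cases hlt : (b : ℕ) < (j : ℕ)
    · refine ⟨Sum.inr ⟨(b : ℕ), by have := j.isLt; omega⟩, ?_⟩
      simp only [eraseMap, Sum.map_inr]
      rw [if_pos hlt]
    · refine ⟨Sum.inr ⟨(b : ℕ) - 2, by have := b.isLt; omega⟩, ?_⟩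
      simp only [eraseMap, Sum.map_inr]
      rw [if_neg (show ¬((b : ℕ) - 2 < (j : ℕ)) by omega)]
      exact congrArg Sum.inr (Fin.ext (show (b : ℕ) - 2 + 2 = (b : ℕ) by omega))

/-- Reindexing equivalence: labellings of `l+2` points correspond to labellings of `l`
points together with the two inserted values. -/
def insEquiv (l : ℕ) (j : Fin (l + 1)) (n : ℕ) :
    ((Fin l → Fin n) × Fin n × Fin n) ≃ (Fin (l + 2) → Fin n) where
  toFun x := ins l j x.1 x.2.1 x.2.2
  invFun γ := (fun b => γ (if (b : ℕ) < (j : ℕ) then ⟨(b : ℕ), by have := b.isLt; omega⟩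
      else ⟨(b : ℕ) + 2, by have := b.isLt; omega⟩),
    γ ⟨(j : ℕ), by have := j.isLt; omega⟩, γ ⟨(j : ℕ) + 1, by have := j.isLt; omega⟩)
  left_inv := by
    rintro ⟨η, c, d⟩
    refine Prod.ext ?_ (Prod.ext ?_ ?_)
    · funext b
      dsimp only
      split_ifs with hb
      · rw [ins_lt η c d hb]
      · rw [ins_ge η c d (t := ⟨(b : ℕ) + 2, by have := b.isLt; omega⟩)
          (show (j : ℕ) + 2 ≤ (b : ℕ) + 2 by omega)]
        exact congrArg η (Fin.ext (show (b : ℕ) + 2 - 2 = (b : ℕ) by omega))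
    · exact ins_j η c d rfl
    · exact ins_j1 η c d rfl
  right_inv := by
    intro γ
    funext t
    dsimp only
    rcases lt_or_ge (t : ℕ) (j : ℕ) with h | h
    · rw [ins_lt _ _ _ h]
      rw [if_pos h]
    · rcases eq_or_lt_of_le h with h' | h'
      · rw [ins_j _ _ _ h'.symm]
        exact congrArg γ (Fin.ext h')
      · rcases eq_or_lt_of_le (Nat.lt_iff_add_one_le.mp h') with h'' | h''
        · rw [ins_j1 _ _ _ h''.symm]
          exact congrArg γ (Fin.ext h'')
        · rw [ins_ge _ _ _ (show (j : ℕ) + 2 ≤ (t : ℕ) by omega)]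
          rw [if_neg (show ¬((t : ℕ) - 2 < (j : ℕ)) by omega)]
          exact congrArg γ (Fin.ext (show (t : ℕ) - 2 + 2 = (t : ℕ) by omega))

/-- Splitting an `ofFn` list of length `l+2` around positions `j`, `j+1`. -/
lemma ofFn_split {M : Type*} (l : ℕ) (j : Fin (l + 1)) (f : Fin (l + 2) → M) (g : Fin l → M)
    (a b : M)
    (hlt : ∀ (t : ℕ) (h2 : t < l + 2) (h : t < (j : ℕ)),
      f ⟨t, h2⟩ = g ⟨t, by have := j.isLt; omega⟩)
    (hge : ∀ (t : ℕ) (h2 : t < l + 2) (h : (j : ℕ) + 2 ≤ t), f ⟨t, h2⟩ = g ⟨t - 2, by omega⟩)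
    (ha : f ⟨(j : ℕ), by have := j.isLt; omega⟩ = a)
    (hb : f ⟨(j : ℕ) + 1, by have := j.isLt; omega⟩ = b) :
    List.ofFn f = (List.ofFn g).take (j : ℕ) ++ (a :: b :: (List.ofFn g).drop (j : ℕ)) := by
  have hj : (j : ℕ) ≤ l := by have := j.isLt; omega
  have hjlen : ((List.ofFn g).take (j : ℕ)).length = (j : ℕ) := by
    simp only [List.length_take, List.length_ofFn]
    omega
  apply List.ext_getElem
  · simp only [List.length_ofFn, List.length_append, List.length_take, List.length_cons,
      List.length_drop]
    omega
  intro i h1 h2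
  rw [List.getElem_ofFn]
  rcases Nat.lt_or_ge i (j : ℕ) with hij | hij
  · rw [List.getElem_append_left (show i < ((List.ofFn g).take (j : ℕ)).length by omega)]
    rw [List.getElem_take, List.getElem_ofFn]
    exact hlt i (by simp at h1; omega) hij
  · rw [List.getElem_append_right (show ((List.ofFn g).take (j : ℕ)).length ≤ i by omega)]
    simp only [hjlen]
    rcases Nat.lt_or_ge i ((j : ℕ) + 1) with hc | hc
    · have h0 : i - (j : ℕ) = 0 := by omega
      simp only [h0, List.getElem_cons_zero]
      exact (congrArg f (Fin.ext (show i = (j : ℕ) by omega))).trans ha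
    · rcases Nat.lt_or_ge i ((j : ℕ) + 2) with hc2 | hc2
      · have h0 : i - (j : ℕ) = 1 := by omega
        simp only [h0, List.getElem_cons_succ, List.getElem_cons_zero]
        exact (congrArg f (Fin.ext (show i = (j : ℕ) + 1 by omega))).trans hb
      · obtain ⟨r, hr⟩ : ∃ r, i - (j : ℕ) = r + 1 + 1 := ⟨i - (j : ℕ) - 2, by omega⟩
        simp only [hr, List.getElem_cons_succ]
        rw [List.getElem_drop, List.getElem_ofFn]
        rw [hge i (by simp at h1; omega) (by omega)]
        exact congrArg g (Fin.ext (show i - 2 = (j : ℕ) + r by omega))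

lemma labelsMatch_ins_iff (p : Partition k (l + 2)) (j : Fin (l + 1))
    (υ : Fin k → Fin n) (β : Fin l → Fin n) (m : Fin n) :
    labelsMatch p υ (ins l j β m m) ↔
      labelsMatch (erasePair p j) υ β ∧
        ∀ z, (mergeBlocks p (ptx k l j) (pty k l j)) z (ptx k l j) →
          Sum.elim υ (ins l j β m m) z = m := by
  have hfx : Sum.elim υ (ins l j β m m) (ptx k l j) = m := ins_j β m m rfl
  have hfy : Sum.elim υ (ins l j β m m) (pty k l j) = m := ins_j1 β m m rfl
  have hqxy : (mergeBlocks p (ptx k l j) (pty k l j)) (ptx k l j) (pty k l j) :=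
    Setoid.le_def.mp (le_sup_right (a := p)) (Or.inr (Or.inl ⟨rfl, rfl⟩))
  have hmerge : labelsMatch p υ (ins l j β m m) ↔
      ∀ a b, (mergeBlocks p (ptx k l j) (pty k l j)) a b →
        Sum.elim υ (ins l j β m m) a = Sum.elim υ (ins l j β m m) b := by
    constructor
    · intro h
      have h1 : p ≤ Setoid.ker (Sum.elim υ (ins l j β m m)) :=
        Setoid.le_def.mpr fun {a b} hab => h a b hab
      have h2 : pairSetoid (ptx k l j) (pty k l j) ≤
          Setoid.ker (Sum.elim υ (ins l j β m m)) := by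
        rw [Setoid.le_def]
        rintro a b (rfl | ⟨rfl, rfl⟩ | ⟨rfl, rfl⟩)
        · rfl
        · exact hfx.trans hfy.symm
        · exact hfy.trans hfx.symm
      exact fun a b hab => Setoid.le_def.mp (sup_le h1 h2) hab
    · intro h a b hab
      exact h a b (Setoid.le_def.mp (le_sup_left (b := pairSetoid (ptx k l j) (pty k l j))) hab)
  rw [hmerge]
  constructor
  · intro h
    refine ⟨?_, fun z hz => (h z _ hz).trans hfx⟩
    intro a b hab
    have h2 := h _ _ hab
    rwa [elim_ins_eraseMap, elim_ins_eraseMap] at h2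
  · rintro ⟨hm, hz⟩ a b hab
    by_cases hax : (mergeBlocks p (ptx k l j) (pty k l j)) a (ptx k l j)
    · have hbx : (mergeBlocks p (ptx k l j) (pty k l j)) b (ptx k l j) :=
        (mergeBlocks p (ptx k l j) (pty k l j)).iseqv.trans
          ((mergeBlocks p (ptx k l j) (pty k l j)).iseqv.symm hab) hax
      rw [hz a hax, hz b hbx]
    · have hax' : a ≠ ptx k l j := fun h' => hax (by rw [h'])
      have hay : a ≠ pty k l j := fun h' => hax (by
        rw [h']; exact (mergeBlocks p (ptx k l j) (pty k l j)).iseqv.symm hqxy)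
      have hbx' : b ≠ ptx k l j := fun h' => hax (by rw [h'] at hab; exact hab)
      have hby : b ≠ pty k l j := fun h' => hax (by
        rw [h'] at hab
        exact (mergeBlocks p (ptx k l j) (pty k l j)).iseqv.trans hab
          ((mergeBlocks p (ptx k l j) (pty k l j)).iseqv.symm hqxy))
      obtain ⟨a₀, ha₀⟩ := erase_surj j a hax' hay
      obtain ⟨b₀, hb₀⟩ := erase_surj j b hbx' hby
      have hrel : (erasePair p j).r a₀ b₀ := by
        show (mergeBlocks p (ptx k l j) (pty k l j))
          (eraseMap k l (j : ℕ) a₀) (eraseMap k l (j : ℕ) b₀)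
        rw [ha₀, hb₀]
        exact hab
      have h3 := hm a₀ b₀ hrel
      rw [← ha₀, ← hb₀, elim_ins_eraseMap, elim_ins_eraseMap]
      exact h3

lemma sum_ins_indicator (p : Partition k (l + 2)) (j : Fin (l + 1))
    (υ : Fin k → Fin n) (β : Fin l → Fin n) :
    (∑ m : Fin n, if labelsMatch p υ (ins l j β m m) then (1 : ℕ) else 0)
      = (if ∀ z, (mergeBlocks p (ptx k l j) (pty k l j)) z (ptx k l j) →
            z = ptx k l j ∨ z = pty k l j then n else 1) *
        (if labelsMatch (erasePair p j) υ β then 1 else 0) := by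
  by_cases hm : labelsMatch (erasePair p j) υ β
  · rw [if_pos hm, mul_one]
    by_cases hH : ∀ z, (mergeBlocks p (ptx k l j) (pty k l j)) z (ptx k l j) →
        z = ptx k l j ∨ z = pty k l j
    · rw [if_pos hH]
      have hall : ∀ m : Fin n, labelsMatch p υ (ins l j β m m) := by
        intro m
        rw [labelsMatch_ins_iff]
        refine ⟨hm, fun z hz => ?_⟩
        rcases hH z hz with rfl | rfl
        · exact ins_j β m m rfl
        · exact ins_j1 β m m rfl
      simp [hall]
    · rw [if_neg hH]
      push_neg at hH
      obtain ⟨z₀, hz₀, hne1, hne2⟩ := hH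
      obtain ⟨w₀, hw₀⟩ := erase_surj j z₀ hne1 hne2
      have key : ∀ m : Fin n, labelsMatch p υ (ins l j β m m) ↔ m = Sum.elim υ β w₀ := by
        intro m
        rw [labelsMatch_ins_iff]
        constructor
        · rintro ⟨-, h⟩
          have h2 := h z₀ hz₀
          rw [← hw₀, elim_ins_eraseMap] at h2
          exact h2.symm
        · rintro rfl
          refine ⟨hm, fun z hz => ?_⟩
          by_cases hzx : z = ptx k l j
          · subst hzx; exact ins_j β _ _ rfl
          by_cases hzy : z = pty k l j
          · subst hzy; exact ins_j1 β _ _ rfl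
          obtain ⟨w, hw⟩ := erase_surj j z hzx hzy
          have hrel : (erasePair p j).r w w₀ := by
            show (mergeBlocks p (ptx k l j) (pty k l j))
              (eraseMap k l (j : ℕ) w) (eraseMap k l (j : ℕ) w₀)
            rw [hw, hw₀]
            exact (mergeBlocks p (ptx k l j) (pty k l j)).iseqv.trans hz
              ((mergeBlocks p (ptx k l j) (pty k l j)).iseqv.symm hz₀)
          have h3 := hm w w₀ hrel
          rw [← hw, elim_ins_eraseMap]
          exact h3
      simp only [key]
      rw [Finset.sum_ite_eq' Finset.univ (Sum.elim υ β w₀) (fun _ => (1 : ℕ))]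
      simp
  · rw [if_neg hm, mul_zero]
    refine Finset.sum_eq_zero fun m _ => ?_
    rw [if_neg]
    intro h
    exact hm ((labelsMatch_ins_iff p j υ β m).mp h).1

lemma sum_ite_count {A : Type*} [AddCommMonoid A] (p : Partition k (l + 2)) (j : Fin (l + 1))
    (υ : Fin k → Fin n) (β : Fin l → Fin n) (P : A) :
    (∑ m : Fin n, if labelsMatch p υ (ins l j β m m) then P else 0)
      = (if ∀ z, (mergeBlocks p (ptx k l j) (pty k l j)) z (ptx k l j) →
            z = ptx k l j ∨ z = pty k l j then n else 1) •
        (if labelsMatch (erasePair p j) υ β then P else 0) := by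
  have h1 : ∀ m : Fin n, (if labelsMatch p υ (ins l j β m m) then P else 0)
      = (if labelsMatch p υ (ins l j β m m) then (1 : ℕ) else 0) • P := by
    intro m; split_ifs <;> simp
  simp only [h1]
  rw [← Finset.sum_smul, sum_ins_indicator p j υ β]
  split_ifs <;> simp [mul_smul]

end EraseAux


/-- Lemma B.3(b) (erasing neighbouring points, for a fixed representation): given the
pair relations, if the relations `R(p)` hold for `p ∈ P(k,l+2)`, then the relations of
the partition in `P(k,l)` obtained by merging the blocks of the `j`-th and `(j+1)`-th
lower points and erasing those two points hold as well. -/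
theorem satisfiesRel_erasePair {A : Type*} [CStarAlgebra A] {n : ℕ}
    (u : Fin n → Fin n → A) (hsa : ∀ i j, IsSelfAdjoint (u i j))
    (hpair₁ : ∀ i j, (∑ m, u i m * u j m) = if i = j then (1 : A) else 0)
    (hpair₂ : ∀ i j, (∑ m, u m i * u m j) = if i = j then (1 : A) else 0)
    {k l : ℕ} (p : Partition k (l + 2)) (j : Fin (l + 1))
    (hp : SatisfiesRel u p) :
    SatisfiesRel u (erasePair p j) := by
  intro α β
  by_cases hn : n = 0
  · subst hn
    cases k with
    | zero =>
      cases l with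
      | zero =>
        rw [Fintype.sum_subsingleton _ α, Fintype.sum_subsingleton _ β]
        have hab : α = β := Subsingleton.elim _ _
        subst hab
        rfl
      | succ l' => exact (β 0).elim0
    | succ k' => exact (α 0).elim0
  · have hn' : 0 < n := Nat.pos_of_ne_zero hn
    set c₀ : ℕ := if ∀ z, (mergeBlocks p (ptx k l j) (pty k l j)) z (ptx k l j) →
        z = ptx k l j ∨ z = pty k l j then n else 1 with hc₀
    have hLHS : (∑ m : Fin n, ∑ γ : Fin k → Fin n, if labelsMatch p γ (ins l j β m m) then
          (List.ofFn fun s => u (γ s) (α s)).prod else 0)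
        = c₀ • ∑ γ : Fin k → Fin n, if labelsMatch (erasePair p j) γ β then
            (List.ofFn fun s => u (γ s) (α s)).prod else 0 := by
      rw [Finset.sum_comm, Finset.smul_sum]
      exact Finset.sum_congr rfl fun γ _ => sum_ite_count p j γ β _
    have hprod : ∀ (η : Fin l → Fin n) (c d : Fin n),
        (∑ m : Fin n,
            (List.ofFn fun t : Fin (l + 2) => u (ins l j β m m t) (ins l j η c d t)).prod)
          = if c = d then (List.ofFn fun t : Fin l => u (β t) (η t)).prod else 0 := by
      intro η c d
      have hsplit : ∀ m : Fin n,
          (List.ofFn fun t : Fin (l + 2) => u (ins l j β m m t) (ins l j η c d t))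
            = (List.ofFn fun t : Fin l => u (β t) (η t)).take (j : ℕ) ++
              (u m c :: u m d :: (List.ofFn fun t : Fin l => u (β t) (η t)).drop (j : ℕ)) := by
        intro m
        refine ofFn_split l j _ _ (u m c) (u m d) ?_ ?_ ?_ ?_
        · intro t h2 h
          rw [ins_lt β m m h, ins_lt η c d h]
        · intro t h2 h
          rw [ins_ge β m m h, ins_ge η c d h]
        · rw [ins_j β m m rfl, ins_j η c d rfl]
        · rw [ins_j1 β m m rfl, ins_j1 η c d rfl]
      simp only [hsplit, List.prod_append, List.prod_cons]
      have step1 : (∑ m : Fin n,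
            ((List.ofFn fun t : Fin l => u (β t) (η t)).take (j : ℕ)).prod *
              (u m c * (u m d * ((List.ofFn fun t : Fin l => u (β t) (η t)).drop (j : ℕ)).prod)))
          = ((List.ofFn fun t : Fin l => u (β t) (η t)).take (j : ℕ)).prod *
              ((∑ m : Fin n, u m c * u m d) *
                ((List.ofFn fun t : Fin l => u (β t) (η t)).drop (j : ℕ)).prod) := by
        rw [Finset.sum_mul, Finset.mul_sum]
        exact Finset.sum_congr rfl fun m _ => by rw [mul_assoc]
      rw [step1, hpair₂ c d]
      split_ifs with hcd
      · rw [one_mul, ← List.prod_append, List.take_append_drop]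
      · rw [zero_mul, mul_zero]
    have hRHS : (∑ m : Fin n, ∑ γ' : Fin (l + 2) → Fin n, if labelsMatch p α γ' then
          (List.ofFn fun t => u (ins l j β m m t) (γ' t)).prod else 0)
        = c₀ • ∑ γ' : Fin l → Fin n, if labelsMatch (erasePair p j) α γ' then
            (List.ofFn fun t => u (β t) (γ' t)).prod else 0 := by
      rw [Finset.sum_comm]
      have hre : (∑ γ' : Fin (l + 2) → Fin n, ∑ m : Fin n, if labelsMatch p α γ' then
            (List.ofFn fun t => u (ins l j β m m t) (γ' t)).prod else 0)
          = ∑ η : Fin l → Fin n, ∑ c : Fin n, ∑ d : Fin n, ∑ m : Fin n,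
              if labelsMatch p α (ins l j η c d) then
                (List.ofFn fun t => u (ins l j β m m t) (ins l j η c d t)).prod else 0 := by
        rw [← Equiv.sum_comp (insEquiv l j n) (fun γ' => ∑ m : Fin n, if labelsMatch p α γ' then
            (List.ofFn fun t => u (ins l j β m m t) (γ' t)).prod else 0), Fintype.sum_prod_type]
        exact Finset.sum_congr rfl fun η _ => Fintype.sum_prod_type _
      rw [hre]
      have hterm : ∀ (η : Fin l → Fin n) (c : Fin n) (d : Fin n),
          (∑ m : Fin n, if labelsMatch p α (ins l j η c d) then
              (List.ofFn fun t => u (ins l j β m m t) (ins l j η c d t)).prod else 0)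
            = if c = d then (if labelsMatch p α (ins l j η c d) then
                (List.ofFn fun t : Fin l => u (β t) (η t)).prod else 0) else 0 := by
        intro η c d
        by_cases hC : labelsMatch p α (ins l j η c d)
        · simp only [if_pos hC]
          exact hprod η c d
        · simp only [if_neg hC, Finset.sum_const_zero]
          split_ifs <;> rfl
      simp only [hterm]
      have hd : ∀ (η : Fin l → Fin n) (c : Fin n),
          (∑ d : Fin n, if c = d then (if labelsMatch p α (ins l j η c d) then
              (List.ofFn fun t : Fin l => u (β t) (η t)).prod else 0) else 0)
            = if labelsMatch p α (ins l j η c c) then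
                (List.ofFn fun t : Fin l => u (β t) (η t)).prod else 0 := by
        intro η c
        rw [Finset.sum_ite_eq Finset.univ c (fun d => if labelsMatch p α (ins l j η c d) then
            (List.ofFn fun t : Fin l => u (β t) (η t)).prod else 0)]
        simp
      simp only [hd]
      rw [Finset.smul_sum]
      exact Finset.sum_congr rfl fun η _ => sum_ite_count p j α η _
    have hfinal : c₀ • (∑ γ : Fin k → Fin n, if labelsMatch (erasePair p j) γ β then
          (List.ofFn fun s => u (γ s) (α s)).prod else 0)
        = c₀ • ∑ γ' : Fin l → Fin n, if labelsMatch (erasePair p j) α γ' then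
            (List.ofFn fun t => u (β t) (γ' t)).prod else 0 := by
      rw [← hLHS, ← hRHS]
      exact Finset.sum_congr rfl fun m _ => hp α (ins l j β m m)
    have hc : (c₀ : ℂ) ≠ 0 := by
      have h0 : c₀ ≠ 0 := by
        rw [hc₀]; split_ifs <;> omega
      exact_mod_cast h0
    calc (∑ γ : Fin k → Fin n, if labelsMatch (erasePair p j) γ β then
            (List.ofFn fun s => u (γ s) (α s)).prod else 0)
        = (c₀ : ℂ)⁻¹ • ((c₀ : ℂ) • ∑ γ : Fin k → Fin n, if labelsMatch (erasePair p j) γ β then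
            (List.ofFn fun s => u (γ s) (α s)).prod else 0) := (inv_smul_smul₀ hc _).symm
      _ = (c₀ : ℂ)⁻¹ • ((c₀ : ℂ) • ∑ γ' : Fin l → Fin n, if labelsMatch (erasePair p j) α γ' then
            (List.ofFn fun t => u (β t) (γ' t)).prod else 0) := by
          rw [Nat.cast_smul_eq_nsmul ℂ, Nat.cast_smul_eq_nsmul ℂ, hfinal]
      _ = _ := inv_smul_smul₀ hc _

end PartitionCstar
end

section
/- (Lemma B.2(b), disconnecting a point, stated for a fixed representation in the self-adjoint case) Let A be a unital C*-algebra and u_{ij} ∈ A (1 ≤ i,j ≤ n) be self-adjoint, satisfying Σ_{k=1}^n u_{kj} = Σ_{l=1}^n u_{il} for all i,j (the relations of the partition in P(1,1) consisting of two singleton blocks). Let p ∈ P(k,l) be a partition such that the relations R(p) hold for the u_{ij}, and let x be any point of p. Then the relations R(p') hold, where p' is obtained from p by disconnecting the point x from its block and turning it into a singleton block (all other blocks unchanged). -/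
open scoped Classical

namespace PartitionCstar

-- ofFn update
lemma ofFn_update {A : Type*} {k : ℕ} (v : Fin k → A) (t : Fin k) (x : A) :
    List.ofFn (Function.update v t x) = (List.ofFn v).set (t : ℕ) x := by
  apply List.ext_getElem
  · simp
  · intro i h1 h2
    simp only [List.getElem_ofFn, List.getElem_set]
    by_cases h : (t : ℕ) = i
    · subst h
      simp [Function.update_apply]
    · rw [if_neg h, Function.update_apply, if_neg]
      intro he
      exact h (congrArg Fin.val he.symm)

lemma sum_prod_update {A : Type*} [Ring A] {n k : ℕ} (v : Fin k → A) (t : Fin k)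
    (a b : Fin n → A) (hab : ∑ c, a c = ∑ c, b c) :
    ∑ c, (List.ofFn (Function.update v t (a c))).prod
      = ∑ c, (List.ofFn (Function.update v t (b c))).prod := by
  have key : ∀ x : A, (List.ofFn (Function.update v t x)).prod
      = ((List.ofFn v).take t).prod * x * ((List.ofFn v).drop (t+1)).prod := by
    intro x
    rw [ofFn_update, List.prod_set, if_pos (by simp [t.isLt])]
  simp only [key, ← Finset.sum_mul, ← Finset.mul_sum, hab]



lemma match_update_iff {n k l : ℕ} (p : Partition k l) {x y : Fin k ⊕ Fin l}
    (hxy : p.r x y) (hyx : y ≠ x) (L : Fin k ⊕ Fin l → Fin n) (c : Fin n) :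
    (∀ a b, p.r a b → Function.update L x c a = Function.update L x c b)
      ↔ ((∀ a b, (disconnect p x).r a b → L a = L b) ∧ c = L y) := by
  constructor
  · intro H
    refine ⟨?_, ?_⟩
    · intro a b hab
      rcases hab with rfl | ⟨hab, ha, hb⟩
      · rfl
      · have := H a b hab
        rwa [Function.update_of_ne ha, Function.update_of_ne hb] at this
    · have := H x y hxy
      rwa [Function.update_self, Function.update_of_ne hyx] at this
  · rintro ⟨Hq, rfl⟩
    intro a b hab
    by_cases ha : a = x <;> by_cases hb : b = x
    · subst ha; subst hb; rfl
    · subst ha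
      rw [Function.update_self, Function.update_of_ne hb]
      have hyb : p.r y b := p.iseqv.trans (p.iseqv.symm hxy) hab
      exact Hq y b (Or.inr ⟨hyb, hyx, hb⟩)
    · subst hb
      rw [Function.update_self, Function.update_of_ne ha]
      have hya : p.r y a := p.iseqv.trans (p.iseqv.symm hxy) (p.iseqv.symm hab)
      exact (Hq y a (Or.inr ⟨hya, hyx, ha⟩)).symm
    · rw [Function.update_of_ne ha, Function.update_of_ne hb]
      exact Hq a b (Or.inr ⟨hab, ha, hb⟩)

lemma sum_ite_update {n k l : ℕ} {A : Type*} [AddCommMonoid A] (p : Partition k l)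
    {x : Fin k ⊕ Fin l} (hx : ∃ y, p.r x y ∧ y ≠ x) (L : Fin k ⊕ Fin l → Fin n) (v : A) :
    ∑ c : Fin n, (if ∀ a b, p.r a b → Function.update L x c a = Function.update L x c b
        then v else 0)
      = if ∀ a b, (disconnect p x).r a b → L a = L b then v else 0 := by
  obtain ⟨y, hxy, hyx⟩ := hx
  by_cases hq : ∀ a b, (disconnect p x).r a b → L a = L b
  · rw [if_pos hq]
    have key : ∀ c : Fin n,
        (∀ a b, p.r a b → Function.update L x c a = Function.update L x c b) ↔ c = L y :=
      fun c => (match_update_iff p hxy hyx L c).trans ⟨And.right, fun h => ⟨hq, h⟩⟩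
    simp only [key]
    simp
  · rw [if_neg hq]
    have key : ∀ c : Fin n,
        ¬(∀ a b, p.r a b → Function.update L x c a = Function.update L x c b) :=
      fun c h => hq ((match_update_iff p hxy hyx L c).mp h).1
    simp only [key]
    simp

lemma sum_ite_update_right {n k l : ℕ} {A : Type*} [AddCommMonoid A] (p : Partition k l)
    {t : Fin l} (hx : ∃ y, p.r (Sum.inr t) y ∧ y ≠ Sum.inr t)
    (γ : Fin k → Fin n) (β : Fin l → Fin n) (v : A) :
    ∑ c : Fin n, (if labelsMatch p γ (Function.update β t c) then v else 0)
      = if labelsMatch (disconnect p (Sum.inr t)) γ β then v else 0 := by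
  have h := sum_ite_update p hx (Sum.elim γ β) v
  simp only [labelsMatch, ← Sum.update_elim_inr]
  convert h using 2
  congr 1

lemma sum_ite_update_left {n k l : ℕ} {A : Type*} [AddCommMonoid A] (p : Partition k l)
    {s : Fin k} (hx : ∃ y, p.r (Sum.inl s) y ∧ y ≠ Sum.inl s)
    (α : Fin k → Fin n) (β : Fin l → Fin n) (v : A) :
    ∑ c : Fin n, (if labelsMatch p (Function.update α s c) β then v else 0)
      = if labelsMatch (disconnect p (Sum.inl s)) α β then v else 0 := by
  have h := sum_ite_update p hx (Sum.elim α β) v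
  simp only [labelsMatch, ← Sum.update_elim_inl]
  convert h using 2
  congr 1

/-- The self-inverse reindexing `(g, c) ↦ (g[t := c], g t)`. -/
def updEquiv {n l : ℕ} (t : Fin l) : ((Fin l → Fin n) × Fin n) ≃ ((Fin l → Fin n) × Fin n) where
  toFun gc := (Function.update gc.1 t gc.2, gc.1 t)
  invFun gc := (Function.update gc.1 t gc.2, gc.1 t)
  left_inv gc := by
    simp [Function.update_idem, Function.update_eq_self]
  right_inv gc := by
    simp [Function.update_idem, Function.update_eq_self]



/-- `R(disconnect p x)` from `R(p)` when `x` is already a singleton of `p`. -/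
lemma satisfiesRel_disconnect_of_singleton {A : Type*} [Ring A] {n : ℕ}
    (u : Fin n → Fin n → A) {k l : ℕ} (p : Partition k l)
    (hp : SatisfiesRel u p) (x : Fin k ⊕ Fin l) (hsingl : ∀ y, p.r x y → y = x) :
    SatisfiesRel u (disconnect p x) := by
  have hEq : ∀ a b, (disconnect p x).r a b ↔ p.r a b := by
    intro a b
    constructor
    · rintro (rfl | ⟨h, -, -⟩)
      · exact p.iseqv.refl a
      · exact h
    · intro h
      by_cases ha : a = x
      · subst ha
        exact Or.inl (hsingl b h).symm
      · by_cases hb : b = x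
        · subst hb
          exact absurd (hsingl a (p.iseqv.symm h)) ha
        · exact Or.inr ⟨h, ha, hb⟩
  have h1 : labelsMatch (n := n) (disconnect p x) = labelsMatch p := by
    funext γ β'
    refine propext ⟨fun H a b h => H a b ((hEq a b).mpr h), fun H a b h => H a b ((hEq a b).mp h)⟩
  intro α β
  simp only [h1]
  exact hp α β

theorem satisfiesRel_disconnect' {A : Type*} [Ring A] {n : ℕ}
    (u : Fin n → Fin n → A)
    (hsing : ∀ i j : Fin n, (∑ m, u m j) = ∑ m, u i m)
    {k l : ℕ} (p : Partition k l) (hp : SatisfiesRel u p) (x : Fin k ⊕ Fin l) :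
    SatisfiesRel u (disconnect p x) := by
  by_cases hsingl : ∀ y, p.r x y → y = x
  · exact satisfiesRel_disconnect_of_singleton u p hp x hsingl
  push_neg at hsingl
  obtain ⟨y, hxy, hyx⟩ := hsingl
  have hx : ∃ y, p.r x y ∧ y ≠ x := ⟨y, hxy, hyx⟩
  clear hxy hyx y
  cases x with
  | inr t =>
    intro α β
    calc
      (∑ γ : Fin k → Fin n, if labelsMatch (disconnect p (Sum.inr t)) γ β then
            (List.ofFn fun s => u (γ s) (α s)).prod else 0)
          = ∑ γ : Fin k → Fin n, ∑ c : Fin n, if labelsMatch p γ (Function.update β t c) then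
              (List.ofFn fun s => u (γ s) (α s)).prod else 0 :=
        Finset.sum_congr rfl fun γ _ => (sum_ite_update_right p hx γ β _).symm
      _ = ∑ c : Fin n, ∑ γ : Fin k → Fin n, if labelsMatch p γ (Function.update β t c) then
              (List.ofFn fun s => u (γ s) (α s)).prod else 0 := Finset.sum_comm
      _ = ∑ c : Fin n, ∑ γ' : Fin l → Fin n, if labelsMatch p α γ' then
              (List.ofFn fun s => u (Function.update β t c s) (γ' s)).prod else 0 :=
        Finset.sum_congr rfl fun c _ => hp α (Function.update β t c)
      _ = ∑ γ' : Fin l → Fin n, ∑ c : Fin n, if labelsMatch p α γ' then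
              (List.ofFn fun s => u (Function.update β t c s) (γ' s)).prod else 0 :=
        Finset.sum_comm
      _ = ∑ γ' : Fin l → Fin n, ∑ m : Fin n, if labelsMatch p α γ' then
              (List.ofFn fun s => u (β s) (Function.update γ' t m s)).prod else 0 := by
        refine Finset.sum_congr rfl fun γ' _ => ?_
        by_cases hm : labelsMatch p α γ'
        · simp only [if_pos hm]
          have e1 : ∀ c : Fin n, (fun s => u (Function.update β t c s) (γ' s))
              = Function.update (fun s => u (β s) (γ' s)) t (u c (γ' t)) := by
            intro c; funext s
            by_cases hs : s = t
            · subst hs; simp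
            · simp [Function.update_of_ne hs]
          have e2 : ∀ m : Fin n, (fun s => u (β s) (Function.update γ' t m s))
              = Function.update (fun s => u (β s) (γ' s)) t (u (β t) m) := by
            intro m; funext s
            by_cases hs : s = t
            · subst hs; simp
            · simp [Function.update_of_ne hs]
          simp only [e1, e2]
          exact sum_prod_update _ t (fun c => u c (γ' t)) (fun m => u (β t) m)
            (hsing (β t) (γ' t))
        · simp [hm]
      _ = ∑ γ'' : Fin l → Fin n, ∑ c : Fin n, if labelsMatch p α (Function.update γ'' t c) then
              (List.ofFn fun s => u (β s) (γ'' s)).prod else 0 := by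
        have e := Fintype.sum_equiv (updEquiv (n := n) t)
          (fun gc : (Fin l → Fin n) × Fin n => if labelsMatch p α gc.1 then
            (List.ofFn fun s => u (β s) (Function.update gc.1 t gc.2 s)).prod else 0)
          (fun gc : (Fin l → Fin n) × Fin n => if labelsMatch p α (Function.update gc.1 t gc.2)
            then (List.ofFn fun s => u (β s) (gc.1 s)).prod else 0)
          (fun gc => by
            simp only [updEquiv, Equiv.coe_fn_mk, Function.update_idem, Function.update_eq_self])
        exact (Fintype.sum_prod_type _).symm.trans (e.trans (Fintype.sum_prod_type _))
      _ = ∑ γ'' : Fin l → Fin n, if labelsMatch (disconnect p (Sum.inr t)) α γ'' then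
              (List.ofFn fun s => u (β s) (γ'' s)).prod else 0 :=
        Finset.sum_congr rfl fun γ'' _ => sum_ite_update_right p hx α γ'' _
  | inl s =>
    intro α β
    calc
      (∑ γ : Fin k → Fin n, if labelsMatch (disconnect p (Sum.inl s)) γ β then
            (List.ofFn fun s' => u (γ s') (α s')).prod else 0)
          = ∑ γ : Fin k → Fin n, ∑ c : Fin n, if labelsMatch p (Function.update γ s c) β then
              (List.ofFn fun s' => u (γ s') (α s')).prod else 0 :=
        Finset.sum_congr rfl fun γ _ => (sum_ite_update_left p hx γ β _).symm
      _ = ∑ γ'' : Fin k → Fin n, ∑ m : Fin n, if labelsMatch p γ'' β then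
              (List.ofFn fun s' => u (Function.update γ'' s m s') (α s')).prod else 0 := by
        have e := Fintype.sum_equiv (updEquiv (n := n) s)
          (fun gc : (Fin k → Fin n) × Fin n => if labelsMatch p (Function.update gc.1 s gc.2) β
            then (List.ofFn fun s' => u (gc.1 s') (α s')).prod else 0)
          (fun gc : (Fin k → Fin n) × Fin n => if labelsMatch p gc.1 β then
            (List.ofFn fun s' => u (Function.update gc.1 s gc.2 s') (α s')).prod else 0)
          (fun gc => by
            simp only [updEquiv, Equiv.coe_fn_mk, Function.update_idem, Function.update_eq_self])
        exact (Fintype.sum_prod_type _).symm.trans (e.trans (Fintype.sum_prod_type _))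
      _ = ∑ γ'' : Fin k → Fin n, ∑ c : Fin n, if labelsMatch p γ'' β then
              (List.ofFn fun s' => u (γ'' s') (Function.update α s c s')).prod else 0 := by
        refine Finset.sum_congr rfl fun γ'' _ => ?_
        by_cases hm : labelsMatch p γ'' β
        · simp only [if_pos hm]
          have e1 : ∀ m : Fin n, (fun s' => u (Function.update γ'' s m s') (α s'))
              = Function.update (fun s' => u (γ'' s') (α s')) s (u m (α s)) := by
            intro m; funext s'
            by_cases hs : s' = s
            · subst hs; simp
            · simp [Function.update_of_ne hs]
          have e2 : ∀ c : Fin n, (fun s' => u (γ'' s') (Function.update α s c s'))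
              = Function.update (fun s' => u (γ'' s') (α s')) s (u (γ'' s) c) := by
            intro c; funext s'
            by_cases hs : s' = s
            · subst hs; simp
            · simp [Function.update_of_ne hs]
          simp only [e1, e2]
          exact sum_prod_update _ s (fun m => u m (α s)) (fun c => u (γ'' s) c)
            (hsing (γ'' s) (α s))
        · simp [hm]
      _ = ∑ c : Fin n, ∑ γ'' : Fin k → Fin n, if labelsMatch p γ'' β then
              (List.ofFn fun s' => u (γ'' s') (Function.update α s c s')).prod else 0 :=
        Finset.sum_comm
      _ = ∑ c : Fin n, ∑ γ' : Fin l → Fin n, if labelsMatch p (Function.update α s c) γ' then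
              (List.ofFn fun t' => u (β t') (γ' t')).prod else 0 :=
        Finset.sum_congr rfl fun c _ => hp (Function.update α s c) β
      _ = ∑ γ' : Fin l → Fin n, ∑ c : Fin n, if labelsMatch p (Function.update α s c) γ' then
              (List.ofFn fun t' => u (β t') (γ' t')).prod else 0 := Finset.sum_comm
      _ = ∑ γ' : Fin l → Fin n, if labelsMatch (disconnect p (Sum.inl s)) α γ' then
              (List.ofFn fun t' => u (β t') (γ' t')).prod else 0 :=
        Finset.sum_congr rfl fun γ' _ => sum_ite_update_left p hx α γ' _


/-- Lemma B.2(b) (disconnecting a point, for a fixed representation, self-adjoint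
case): given the relations `∑ₖ u_{kj} = ∑ₗ u_{il}` of the double-singleton partition
in `P(1,1)`, if the relations `R(p)` hold, then the relations of the partition obtained
by disconnecting any point `x` from its block (turning it into a singleton) hold. -/
theorem satisfiesRel_disconnect {A : Type*} [CStarAlgebra A] {n : ℕ}
    (u : Fin n → Fin n → A) (hsa : ∀ i j, IsSelfAdjoint (u i j))
    (hsing : ∀ i j : Fin n, (∑ m, u m j) = ∑ m, u i m)
    {k l : ℕ} (p : Partition k l) (hp : SatisfiesRel u p) (x : Fin k ⊕ Fin l) :
    SatisfiesRel u (disconnect p x) :=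
  satisfiesRel_disconnect' u hsing p hp x

end PartitionCstar
end

section
/- (Lemma B.2(c), connecting neighbouring blocks, stated for a fixed representation in the self-adjoint case) Let A be a unital C*-algebra and u_{ij} ∈ A (1 ≤ i,j ≤ n) be self-adjoint, and suppose the relations R(f) hold for the u_{ij}, where f ∈ P(2,2) is the four-block partition whose unique block contains all four points (equivalently, u_{ki}u_{kj} = 0 and u_{ik}u_{jk} = 0 for all k and all i ≠ j after rotation). Let p ∈ P(k,l) be a partition such that R(p) holds, and let 1 ≤ j ≤ l-1 be such that the j-th and (j+1)-th lower points of p lie in different blocks. Then the relations R(p') hold, where p' is obtained from p by connecting (merging) the blocks of the j-th and (j+1)-th lower points. -/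
open scoped Classical

namespace PartitionCstar

lemma prod_ofFn_eq_zero {A : Type*} [Ring A] {l : ℕ} (g : Fin l → A)
    (j : ℕ) (hj : j + 1 < l) (h : g ⟨j, by omega⟩ * g ⟨j + 1, hj⟩ = 0) :
    (List.ofFn g).prod = 0 := by
  have hlen : (List.ofFn g).length = l := List.length_ofFn
  rw [← List.prod_take_mul_prod_drop (List.ofFn g) j,
    List.drop_eq_getElem_cons (by omega), List.drop_eq_getElem_cons (by omega),
    List.prod_cons, List.prod_cons]
  rw [List.getElem_ofFn, List.getElem_ofFn]
  rw [← mul_assoc (g _), h]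
  simp

lemma labelsMatch_mergeBlocks {n k l : ℕ} (p : Partition k l) (x y : Fin k ⊕ Fin l)
    (α : Fin k → Fin n) (β : Fin l → Fin n) :
    labelsMatch (mergeBlocks p x y) α β ↔
      labelsMatch p α β ∧ Sum.elim α β x = Sum.elim α β y := by
  constructor
  · intro h
    exact ⟨fun a b hab => h a b (le_sup_left (a := p) hab),
      h x y (le_sup_right (b := pairSetoid x y) (Or.inr (Or.inl ⟨rfl, rfl⟩)))⟩
  · rintro ⟨h1, h2⟩ a b hab
    have hK : mergeBlocks p x y ≤ Setoid.ker (Sum.elim α β) := by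
      refine sup_le (fun a b hab => h1 a b hab) ?_
      rintro a b (rfl | ⟨rfl, rfl⟩ | ⟨rfl, rfl⟩)
      · rfl
      · exact h2
      · exact h2.symm
    exact hK hab

lemma labelsMatch_top_two {n : ℕ} (γ β : Fin 2 → Fin n) :
    labelsMatch (⊤ : Partition 2 2) γ β ↔ γ 0 = β 1 ∧ γ 1 = β 1 ∧ β 0 = β 1 := by
  constructor
  · intro h
    exact ⟨h (Sum.inl 0) (Sum.inr 1) trivial, h (Sum.inl 1) (Sum.inr 1) trivial,
      h (Sum.inr 0) (Sum.inr 1) trivial⟩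
  · rintro ⟨h1, h2, h3⟩ x y _
    rcases x with a | a <;> rcases y with b | b <;> fin_cases a <;> fin_cases b <;> simp_all

lemma row_orth {A : Type*} [Ring A] {n : ℕ} (u : Fin n → Fin n → A)
    (hfour : SatisfiesRel u (⊤ : Partition 2 2)) (b i i' : Fin n) (hii : i ≠ i') :
    u b i * u b i' = 0 := by
  have key := hfour ![i, i'] ![b, b]
  rw [Fintype.sum_eq_single (fun _ : Fin 2 => b), if_pos, Finset.sum_eq_zero] at key
  · simpa [List.ofFn_succ] using key.symm.symm
  · intro γ' _
    rw [if_neg]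
    rw [labelsMatch_top_two]
    simp only [Matrix.cons_val_zero, Matrix.cons_val_one, Matrix.head_cons]
    rintro ⟨rfl, h2, -⟩
    exact hii (h2.symm)
  · rw [labelsMatch_top_two]; simp
  · intro γ hγ
    rw [if_neg]
    rw [labelsMatch_top_two]
    simp only [Matrix.cons_val_zero, Matrix.cons_val_one, Matrix.head_cons]
    rintro ⟨h0, h1, -⟩
    exact hγ (funext fun t => by fin_cases t <;> assumption)

lemma col_orth {A : Type*} [Ring A] {n : ℕ} (u : Fin n → Fin n → A)
    (hfour : SatisfiesRel u (⊤ : Partition 2 2)) (b b' c : Fin n) (hbb : b ≠ b') :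
    u b c * u b' c = 0 := by
  have key := hfour ![c, c] ![b, b']
  rw [Finset.sum_eq_zero, Fintype.sum_eq_single (fun _ : Fin 2 => c), if_pos] at key
  · simpa [List.ofFn_succ] using key.symm
  · rw [labelsMatch_top_two]; simp
  · intro γ hγ
    rw [if_neg]
    rw [labelsMatch_top_two]
    simp only [Matrix.cons_val_zero, Matrix.cons_val_one, Matrix.head_cons]
    rintro ⟨h0, -, h3⟩
    exact hγ (funext fun t => by fin_cases t <;> simp [h3, h0.symm])
  · intro γ _
    rw [if_neg]
    rw [labelsMatch_top_two]
    simp only [Matrix.cons_val_zero, Matrix.cons_val_one, Matrix.head_cons]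
    rintro ⟨-, -, h3⟩
    exact hbb h3

/-- Lemma B.2(c) (connecting neighbouring blocks, for a fixed representation,
self-adjoint case): given the relations `R(f)` of the four-block partition
`f ∈ P(2,2)` (the partition of `2+2` points with a single block), if the relations
`R(p)` hold and the `j`-th and `(j+1)`-th lower points of `p` lie in different blocks,
then the relations of the partition obtained by merging these two blocks hold. -/
theorem satisfiesRel_mergeBlocks {A : Type*} [CStarAlgebra A] {n : ℕ}
    (u : Fin n → Fin n → A) (hsa : ∀ i j, IsSelfAdjoint (u i j))
    (hfour : SatisfiesRel u (⊤ : Partition 2 2))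
    {k l : ℕ} (p : Partition k l) (hp : SatisfiesRel u p)
    (j : Fin l) (hj : (j : ℕ) + 1 < l)
    (hdiff : ¬ p.r (Sum.inr j : Fin k ⊕ Fin l) (Sum.inr ⟨(j : ℕ) + 1, hj⟩)) :
    SatisfiesRel u (mergeBlocks p (Sum.inr j : Fin k ⊕ Fin l) (Sum.inr ⟨(j : ℕ) + 1, hj⟩)) := by
  set j1 : Fin l := ⟨(j : ℕ) + 1, hj⟩ with hj1
  intro α β
  have hmergeL : ∀ γ : Fin k → Fin n,
      labelsMatch (mergeBlocks p (Sum.inr j : Fin k ⊕ Fin l) (Sum.inr j1)) γ β ↔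
        labelsMatch p γ β ∧ β j = β j1 := fun γ =>
    labelsMatch_mergeBlocks p (Sum.inr j) (Sum.inr j1) γ β
  have hmergeR : ∀ γ' : Fin l → Fin n,
      labelsMatch (mergeBlocks p (Sum.inr j : Fin k ⊕ Fin l) (Sum.inr j1)) α γ' ↔
        labelsMatch p α γ' ∧ γ' j = γ' j1 := fun γ' =>
    labelsMatch_mergeBlocks p (Sum.inr j) (Sum.inr j1) α γ'
  by_cases hb : β j = β j1
  · calc
      (∑ γ : Fin k → Fin n,
          if labelsMatch (mergeBlocks p (Sum.inr j : Fin k ⊕ Fin l) (Sum.inr j1)) γ β then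
            (List.ofFn fun s => u (γ s) (α s)).prod else 0)
          = ∑ γ : Fin k → Fin n,
            if labelsMatch p γ β then (List.ofFn fun s => u (γ s) (α s)).prod else 0 :=
        Finset.sum_congr rfl fun γ _ => by rw [hmergeL]; simp [hb]
      _ = ∑ γ' : Fin l → Fin n,
            if labelsMatch p α γ' then (List.ofFn fun t => u (β t) (γ' t)).prod else 0 :=
        hp α β
      _ = _ := by
        refine Finset.sum_congr rfl fun γ' _ => ?_
        by_cases hg : γ' j = γ' j1
        · rw [hmergeR]
          simp [hg]
        · rw [if_neg (show ¬ labelsMatch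
              (mergeBlocks p (Sum.inr j : Fin k ⊕ Fin l) (Sum.inr j1)) α γ' from
              fun h => hg ((hmergeR γ').mp h).2)]
          split
          · refine prod_ofFn_eq_zero (fun t => u (β t) (γ' t)) (j : ℕ) hj ?_
            have hbb : β j1 = β j := hb.symm
            show u (β j) (γ' j) * u (β j1) (γ' j1) = 0
            rw [hbb]
            exact row_orth u hfour (β j) (γ' j) (γ' j1) hg
          · rfl
  · refine (Finset.sum_eq_zero fun γ _ =>
      if_neg (fun h => hb ((hmergeL γ).mp h).2)).trans
      (Finset.sum_eq_zero fun γ' _ => ?_).symm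
    split
    · rename_i h
      rw [hmergeR] at h
      refine prod_ofFn_eq_zero (fun t => u (β t) (γ' t)) (j : ℕ) hj ?_
      show u (β j) (γ' j) * u (β j1) (γ' j1) = 0
      rw [← h.2]
      exact col_orth u hfour (β j) (β j1) (γ' j) hb
    · rfl

end PartitionCstar
end

section
/- (Lemma B.4(a), stated for a fixed representation in the self-adjoint case) Let A be a unital C*-algebra and u_{ij} ∈ A (1 ≤ i,j ≤ n) be self-adjoint, satisfying Σ_{m=1}^n u_{im}u_{jm} = δ_{ij}·1 and Σ_{m=1}^n u_{mi}u_{mj} = δ_{ij}·1 for all i,j. Let H ⊆ P be the set of all partitions p for which the relations R(p) hold for the u_{ij}. Then the partition s ∈ P(1,1) consisting of two singleton blocks (one upper singleton and one lower singleton) is NOT in H if and only if every block of every partition p ∈ H has at least two points. -/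
open scoped Classical

namespace PartitionCstar

/-! ### Auxiliary machinery for Lemma B.4(a) -/

section Aux

variable {A : Type*} [Ring A] {n : ℕ} (u : Fin n → Fin n → A)

/-- Forward product `u_{β₀γ₀} ⋯ u_{β_{w-1}γ_{w-1}}`. -/
def pfwd {w : ℕ} (β γ : Fin w → Fin n) : A :=
  (List.ofFn fun s => u (β s) (γ s)).prod

/-- Reversed product `u_{β_{w-1}γ_{w-1}} ⋯ u_{β₀γ₀}`. -/
def prev {w : ℕ} (β γ : Fin w → Fin n) : A :=
  (List.ofFn fun s => u (β s.rev) (γ s.rev)).prod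

@[simp] lemma pfwd_zero (β γ : Fin 0 → Fin n) : pfwd u β γ = 1 := by simp [pfwd]

@[simp] lemma prev_zero (β γ : Fin 0 → Fin n) : prev u β γ = 1 := by simp [prev]

lemma pfwd_succ {w : ℕ} (β γ : Fin (w+1) → Fin n) :
    pfwd u β γ = u (β 0) (γ 0) * pfwd u (β ∘ Fin.succ) (γ ∘ Fin.succ) := by
  simp [pfwd, List.ofFn_succ, Function.comp]

lemma prev_succ {w : ℕ} (β γ : Fin (w+1) → Fin n) :
    prev u β γ = prev u (β ∘ Fin.succ) (γ ∘ Fin.succ) * u (β 0) (γ 0) := by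
  rw [prev, List.ofFn_succ', List.concat_eq_append, List.prod_append]
  simp [prev, Fin.rev_castSucc, Function.comp]

lemma sum_pi_succ {M : Type*} [AddCommMonoid M] {N : ℕ} (g : (Fin (N+1) → Fin n) → M) :
    ∑ Γ : Fin (N+1) → Fin n, g Γ = ∑ c : Fin n, ∑ γ : Fin N → Fin n, g (Fin.cons c γ) :=
  calc ∑ Γ : Fin (N+1) → Fin n, g Γ
      = ∑ x : Fin n × (Fin N → Fin n), g (Fin.cons x.1 x.2) :=
        (Fintype.sum_equiv (Fin.consEquiv fun _ => Fin n) _ _ fun x => rfl).symm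
    _ = ∑ c : Fin n, ∑ γ : Fin N → Fin n, g (Fin.cons c γ) := Fintype.sum_prod_type _

lemma fun_succ_ext {w : ℕ} (f g : Fin (w+1) → Fin n) :
    f = g ↔ f 0 = g 0 ∧ f ∘ Fin.succ = g ∘ Fin.succ := by
  constructor
  · rintro rfl; exact ⟨rfl, rfl⟩
  · rintro ⟨h0, hs⟩
    funext x
    refine Fin.cases h0 (fun i => congrFun hs i) x

/-- Left telescoping: contracting a reversed product against a forward product. -/
lemma teleL (hpair₂ : ∀ i j, (∑ m, u m i * u m j) = if i = j then (1 : A) else 0) :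
    ∀ {w : ℕ} (γh γ : Fin w → Fin n),
      ∑ β : Fin w → Fin n, prev u β γh * pfwd u β γ = if γh = γ then 1 else 0
  | 0, γh, γ => by
      rw [Fintype.sum_unique]
      simp [Subsingleton.elim γh γ]
  | w+1, γh, γ => by
      have key : ∀ β' : Fin w → Fin n, ∀ c : Fin n,
          prev u (Fin.cons c β') γh * pfwd u (Fin.cons c β') γ
            = prev u β' (γh ∘ Fin.succ) *
                ((u c (γh 0) * u c (γ 0)) * pfwd u β' (γ ∘ Fin.succ)) := by
        intro β' c
        rw [prev_succ, pfwd_succ]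
        have h1 : (Fin.cons c β' : Fin (w+1) → Fin n) ∘ Fin.succ = β' := by
          funext s; simp
        have h2 : (Fin.cons c β' : Fin (w+1) → Fin n) 0 = c := rfl
        rw [h1, h2, mul_assoc, mul_assoc]
      calc ∑ β : Fin (w+1) → Fin n, prev u β γh * pfwd u β γ
          = ∑ c : Fin n, ∑ β' : Fin w → Fin n,
              prev u β' (γh ∘ Fin.succ) *
                ((u c (γh 0) * u c (γ 0)) * pfwd u β' (γ ∘ Fin.succ)) := by
            rw [sum_pi_succ]
            exact Finset.sum_congr rfl fun c _ => Finset.sum_congr rfl fun β' _ => key β' c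
        _ = ∑ β' : Fin w → Fin n, prev u β' (γh ∘ Fin.succ) *
              ((∑ c : Fin n, u c (γh 0) * u c (γ 0)) * pfwd u β' (γ ∘ Fin.succ)) := by
            rw [Finset.sum_comm]
            refine Finset.sum_congr rfl fun β' _ => ?_
            rw [← Finset.mul_sum, ← Finset.sum_mul]
        _ = (if γh 0 = γ 0 then (1:A) else 0) *
              ∑ β' : Fin w → Fin n, prev u β' (γh ∘ Fin.succ) * pfwd u β' (γ ∘ Fin.succ) := by
            rw [hpair₂ (γh 0) (γ 0), Finset.mul_sum]
            refine Finset.sum_congr rfl fun β' _ => ?_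
            by_cases h : γh 0 = γ 0 <;> simp [h]
        _ = if γh = γ then 1 else 0 := by
            rw [teleL hpair₂ (γh ∘ Fin.succ) (γ ∘ Fin.succ)]
            by_cases h0 : γh 0 = γ 0 <;> by_cases hs : γh ∘ Fin.succ = γ ∘ Fin.succ <;>
              simp [h0, hs, fun_succ_ext γh γ]

lemma sum_comp_rev {M : Type*} [AddCommMonoid M] {w : ℕ} (g : (Fin w → Fin n) → M) :
    ∑ β : Fin w → Fin n, g β = ∑ β : Fin w → Fin n, g (β ∘ Fin.rev) :=
  (Fintype.sum_equiv (Equiv.arrowCongr Fin.revPerm (Equiv.refl (Fin n))) _ _ fun x => by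
    rfl).symm

lemma pfwd_comp_rev {w : ℕ} (β γ : Fin w → Fin n) :
    pfwd u (β ∘ Fin.rev) γ = prev u β (γ ∘ Fin.rev) := by
  unfold pfwd prev
  have : (fun s : Fin w => u ((β ∘ Fin.rev) s) (γ s))
      = fun s : Fin w => u (β s.rev) ((γ ∘ Fin.rev) s.rev) := by
    funext s; simp [Fin.rev_rev]
  rw [this]

lemma prev_comp_rev {w : ℕ} (β γ : Fin w → Fin n) :
    prev u (β ∘ Fin.rev) γ = pfwd u β (γ ∘ Fin.rev) := by
  unfold pfwd prev
  have : (fun s : Fin w => u ((β ∘ Fin.rev) s.rev) (γ s.rev))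
      = fun s : Fin w => u (β s) ((γ ∘ Fin.rev) s) := by
    funext s; simp [Fin.rev_rev]
  rw [this]

/-- Right telescoping: contracting a forward product against a reversed product. -/
lemma teleR (hpair₂ : ∀ i j, (∑ m, u m i * u m j) = if i = j then (1 : A) else 0)
    {w : ℕ} (γ γh : Fin w → Fin n) :
    ∑ β : Fin w → Fin n, pfwd u β γ * prev u β γh = if γ = γh then 1 else 0 := by
  rw [sum_comp_rev (fun β => pfwd u β γ * prev u β γh)]
  have : ∀ β : Fin w → Fin n,
      pfwd u (β ∘ Fin.rev) γ * prev u (β ∘ Fin.rev) γh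
        = prev u β (γ ∘ Fin.rev) * pfwd u β (γh ∘ Fin.rev) := by
    intro β; rw [pfwd_comp_rev, prev_comp_rev]
  rw [Finset.sum_congr rfl fun β _ => this β, teleL u hpair₂]
  have hiff : γ ∘ Fin.rev = γh ∘ Fin.rev ↔ γ = γh := by
    constructor
    · intro h; funext x
      have := congrFun h x.rev
      simpa [Fin.rev_rev] using this
    · rintro rfl; rfl
  by_cases h : γ = γh <;> simp [hiff, h]

end Aux

section Rotation

variable {A : Type*} [Ring A] {n : ℕ} (u : Fin n → Fin n → A)

/-- Inverse of `rotateMap`. -/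
def invRotateMap (k l : ℕ) : Fin (k + 1) ⊕ Fin l → Fin k ⊕ Fin (l + 1)
  | Sum.inl a => Fin.cases (Sum.inr 0) (fun a' => Sum.inl a') a
  | Sum.inr b => Sum.inr b.succ

lemma rotateMap_invRotateMap (k l : ℕ) : ∀ z, rotateMap k l (invRotateMap k l z) = z
  | Sum.inl a => by
      refine Fin.cases ?_ (fun a' => ?_) a <;> simp [invRotateMap, rotateMap]
  | Sum.inr b => by simp [invRotateMap, rotateMap]

lemma invRotateMap_rotateMap (k l : ℕ) : ∀ z, invRotateMap k l (rotateMap k l z) = z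
  | Sum.inl a => by simp [invRotateMap, rotateMap]
  | Sum.inr b => by
      refine Fin.cases ?_ (fun b' => ?_) b <;> simp [invRotateMap, rotateMap]

lemma labelsMatch_rotate {k l : ℕ} (p : Partition (k+1) l)
    (a : Fin k → Fin n) (b : Fin (l+1) → Fin n) :
    labelsMatch (rotate p) a b ↔ labelsMatch p (Fin.cons (b 0) a) (b ∘ Fin.succ) := by
  have hpt : ∀ x, Sum.elim (Fin.cons (b 0) a : Fin (k+1) → Fin n) (b ∘ Fin.succ)
      (rotateMap k l x) = Sum.elim a b x := by
    rintro (x | x)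
    · simp [rotateMap]
    · refine Fin.cases ?_ (fun x' => ?_) x <;> simp [rotateMap]
  constructor
  · intro h x y hxy
    obtain ⟨x', rfl⟩ : ∃ z, rotateMap k l z = x :=
      ⟨invRotateMap k l x, rotateMap_invRotateMap k l x⟩
    obtain ⟨y', rfl⟩ : ∃ z, rotateMap k l z = y :=
      ⟨invRotateMap k l y, rotateMap_invRotateMap k l y⟩
    rw [hpt, hpt]
    exact h x' y' hxy
  · intro h x y hxy
    rw [← hpt, ← hpt]
    exact h _ _ hxy

lemma pfwd_cons {w : ℕ} (c a : Fin n) (γ : Fin w → Fin n) (α : Fin w → Fin n) :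
    pfwd u (Fin.cons c γ) (Fin.cons a α) = u c a * pfwd u γ α := by
  rw [pfwd_succ]
  have h1 : (Fin.cons c γ : Fin (w+1) → Fin n) ∘ Fin.succ = γ := by funext s; simp
  have h2 : (Fin.cons a α : Fin (w+1) → Fin n) ∘ Fin.succ = α := by funext s; simp
  rw [h1, h2]
  rfl

lemma satisfiesRel_rotate
    (hpair₁ : ∀ i j, (∑ m, u i m * u j m) = if i = j then (1 : A) else 0)
    {k l : ℕ} {p : Partition (k+1) l} (hp : SatisfiesRel u p) :
    SatisfiesRel u (rotate p) := by
  intro α β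
  show (∑ γ : Fin k → Fin n, if labelsMatch (rotate p) γ β then pfwd u γ α else 0)
    = ∑ γ' : Fin (l+1) → Fin n, if labelsMatch (rotate p) α γ' then pfwd u β γ' else 0
  calc ∑ γ : Fin k → Fin n, (if labelsMatch (rotate p) γ β then pfwd u γ α else 0)
      = ∑ γ : Fin k → Fin n,
          (if labelsMatch p (Fin.cons (β 0) γ) (β ∘ Fin.succ) then pfwd u γ α else 0) := by
        refine Finset.sum_congr rfl fun γ _ => ?_
        rw [if_congr (labelsMatch_rotate p γ β) rfl rfl]
    _ = ∑ γ : Fin k → Fin n, ∑ c : Fin n,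
          (if β 0 = c then
            (if labelsMatch p (Fin.cons c γ) (β ∘ Fin.succ) then pfwd u γ α else 0) else 0) := by
        refine Finset.sum_congr rfl fun γ _ => ?_
        rw [Finset.sum_ite_eq]
        simp
    _ = ∑ γ : Fin k → Fin n, ∑ c : Fin n,
          (∑ a : Fin n, u (β 0) a * u c a) *
            (if labelsMatch p (Fin.cons c γ) (β ∘ Fin.succ) then pfwd u γ α else 0) := by
        refine Finset.sum_congr rfl fun γ _ => Finset.sum_congr rfl fun c _ => ?_
        rw [hpair₁ (β 0) c]
        by_cases h : β 0 = c <;> simp [h]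
    _ = ∑ γ : Fin k → Fin n, ∑ c : Fin n, ∑ a : Fin n,
          u (β 0) a * (if labelsMatch p (Fin.cons c γ) (β ∘ Fin.succ)
            then u c a * pfwd u γ α else 0) := by
        refine Finset.sum_congr rfl fun γ _ => Finset.sum_congr rfl fun c _ => ?_
        rw [Finset.sum_mul]
        refine Finset.sum_congr rfl fun a _ => ?_
        by_cases h : labelsMatch p (Fin.cons c γ) (β ∘ Fin.succ) <;> simp [h, mul_assoc]
    _ = ∑ a : Fin n, ∑ c : Fin n, ∑ γ : Fin k → Fin n,
          u (β 0) a * (if labelsMatch p (Fin.cons c γ) (β ∘ Fin.succ)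
            then u c a * pfwd u γ α else 0) := by
        rw [show (∑ γ : Fin k → Fin n, ∑ c : Fin n, ∑ a : Fin n,
            u (β 0) a * (if labelsMatch p (Fin.cons c γ) (β ∘ Fin.succ)
              then u c a * pfwd u γ α else 0))
          = ∑ γ : Fin k → Fin n, ∑ a : Fin n, ∑ c : Fin n,
            u (β 0) a * (if labelsMatch p (Fin.cons c γ) (β ∘ Fin.succ)
              then u c a * pfwd u γ α else 0)
          from Finset.sum_congr rfl fun γ _ => Finset.sum_comm]
        rw [Finset.sum_comm]
        refine Finset.sum_congr rfl fun a _ => Finset.sum_comm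
    _ = ∑ a : Fin n, u (β 0) a * ∑ Γ : Fin (k+1) → Fin n,
          (if labelsMatch p Γ (β ∘ Fin.succ) then pfwd u Γ (Fin.cons a α) else 0) := by
        refine Finset.sum_congr rfl fun a _ => ?_
        rw [sum_pi_succ (fun Γ : Fin (k+1) → Fin n =>
          if labelsMatch p Γ (β ∘ Fin.succ) then pfwd u Γ (Fin.cons a α) else 0)]
        rw [Finset.mul_sum]
        refine Finset.sum_congr rfl fun c _ => ?_
        rw [Finset.mul_sum]
        refine Finset.sum_congr rfl fun γ _ => ?_
        rw [pfwd_cons]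
    _ = ∑ a : Fin n, u (β 0) a * ∑ γ'' : Fin l → Fin n,
          (if labelsMatch p (Fin.cons a α) γ'' then pfwd u (β ∘ Fin.succ) γ'' else 0) := by
        refine Finset.sum_congr rfl fun a _ => ?_
        congr 1
        exact hp (Fin.cons a α) (β ∘ Fin.succ)
    _ = ∑ γ' : Fin (l+1) → Fin n,
          (if labelsMatch (rotate p) α γ' then pfwd u β γ' else 0) := by
        rw [sum_pi_succ (fun γ' : Fin (l+1) → Fin n =>
          if labelsMatch (rotate p) α γ' then pfwd u β γ' else 0)]
        refine Finset.sum_congr rfl fun a _ => ?_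
        rw [Finset.mul_sum]
        refine Finset.sum_congr rfl fun γ'' _ => ?_
        rw [if_congr (labelsMatch_rotate p α (Fin.cons a γ'')) rfl rfl]
        have h1 : (Fin.cons a γ'' : Fin (l+1) → Fin n) 0 = a := rfl
        have h2 : (Fin.cons a γ'' : Fin (l+1) → Fin n) ∘ Fin.succ = γ'' := by
          funext s; simp
        rw [h1, h2, pfwd_succ u β (Fin.cons a γ'')]
        have h3 : (Fin.cons a γ'' : Fin (l+1) → Fin n) 0 = a := rfl
        rw [h3, h2]
        by_cases h : labelsMatch p (Fin.cons a α) γ'' <;> simp [h, Function.comp]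

lemma reduce_to_lower
    (hpair₁ : ∀ i j, (∑ m, u i m * u j m) = if i = j then (1 : A) else 0) :
    ∀ (k : ℕ) {l : ℕ} (p : Partition k l), SatisfiesRel u p →
      (∃ x, ∀ y, p.r x y → y = x) →
      ∃ (m : ℕ) (q : Partition 0 m) (τ : Fin m),
        SatisfiesRel u q ∧ ∀ y, q.r (Sum.inr τ) y → y = Sum.inr τ
  | 0, l, p, hp, ⟨x, hx⟩ => by
      obtain (a | b) := x
      · exact a.elim0
      · exact ⟨l, p, b, hp, hx⟩
  | (k+1), l, p, hp, ⟨x, hx⟩ => by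
      refine reduce_to_lower hpair₁ k (rotate p) (satisfiesRel_rotate u hpair₁ hp) ?_
      refine ⟨invRotateMap k l x, fun y hy => ?_⟩
      have h0 : p.r (rotateMap k l (invRotateMap k l x)) (rotateMap k l y) := hy
      rw [rotateMap_invRotateMap] at h0
      have h2 := hx _ h0
      exact (invRotateMap_rotateMap k l y).symm.trans (congrArg (invRotateMap k l) h2)

end Rotation

section Lower

variable {A : Type*} [Ring A] {n : ℕ} (u : Fin n → Fin n → A)

/-- Joining a left part, a middle value and a right part into one tuple. -/
def jn {t r : ℕ} (βL : Fin t → Fin n) (c : Fin n) (βR : Fin r → Fin n) :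
    Fin (t + (1 + r)) → Fin n :=
  Fin.append βL (Fin.append (fun _ : Fin 1 => c) βR)

lemma jn_mid {t r : ℕ} (βL : Fin t → Fin n) (c : Fin n) (βR : Fin r → Fin n)
    (τ : Fin (t + (1 + r))) (hτ : (τ : ℕ) = t) : jn βL c βR τ = c := by
  have hτ' : τ = Fin.natAdd t (Fin.castAdd r (0 : Fin 1)) := by
    apply Fin.ext; simp [hτ]
  rw [hτ', jn, Fin.append_right, Fin.append_left]

lemma jn_off {t r : ℕ} (βL : Fin t → Fin n) (c c' : Fin n) (βR : Fin r → Fin n)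
    (τ : Fin (t + (1 + r))) (hτ : (τ : ℕ) = t) (x : Fin (t + (1 + r))) (hx : x ≠ τ) :
    jn βL c βR x = jn βL c' βR x := by
  revert hx
  refine Fin.addCases (fun i _ => ?_) (fun j => ?_) x
  · simp [jn, Fin.append_left]
  · refine Fin.addCases (fun j1 hj => ?_) (fun j2 _ => ?_) j
    · exfalso
      apply hj
      apply Fin.ext
      have h1 : (j1 : ℕ) = 0 := by have := j1.isLt; omega
      simp [hτ, h1]
    · simp [jn, Fin.append_right]

lemma jn_const {t r : ℕ} (c : Fin n) :
    (jn (fun _ : Fin t => c) c (fun _ : Fin r => c)) = fun _ => c := by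
  funext x
  refine Fin.addCases (fun i => ?_) (fun j => ?_) x
  · simp [jn, Fin.append_left]
  · refine Fin.addCases (fun j1 => ?_) (fun j2 => ?_) j
    · simp [jn, Fin.append_right, Fin.append_left]
    · simp [jn, Fin.append_right]

lemma pfwd_jn {t r : ℕ} (βL γL : Fin t → Fin n) (c d : Fin n) (βR γR : Fin r → Fin n) :
    pfwd u (jn βL c βR) (jn γL d γR) = pfwd u βL γL * (u c d * pfwd u βR γR) := by
  unfold pfwd jn
  rw [List.ofFn_add, List.prod_append, List.ofFn_add, List.prod_append]
  simp only [Fin.append_left, Fin.append_right]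
  congr 1
  · simp [List.ofFn_succ]
  · congr 1
    rw [List.ofFn_succ, List.ofFn_zero]
    simp only [List.prod_cons, List.prod_nil, mul_one]
    rfl

lemma sum_jn {M : Type*} [AddCommMonoid M] {t r : ℕ}
    (g : (Fin (t + (1 + r)) → Fin n) → M) :
    ∑ β, g β = ∑ βL : Fin t → Fin n, ∑ c : Fin n, ∑ βR : Fin r → Fin n,
      g (jn βL c βR) := by
  rw [← (Fin.appendEquiv t (1+r)).sum_comp, Fintype.sum_prod_type]
  refine Finset.sum_congr rfl fun βL _ => ?_
  rw [← (Fin.appendEquiv 1 r).sum_comp, Fintype.sum_prod_type]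
  rw [← (Equiv.funUnique (Fin 1) (Fin n)).symm.sum_comp]
  rfl

/-- At a partition with no upper points and a lower singleton, all row sums
of `u` agree. -/
lemma rowsums_eq
    (hpair₂ : ∀ i j, (∑ m, u m i * u m j) = if i = j then (1 : A) else 0)
    {m : ℕ} (q : Partition 0 m) (hq : SatisfiesRel u q) (τ : Fin m)
    (hτ : ∀ y, q.r (Sum.inr τ) y → y = Sum.inr τ) (c0 i : Fin n) :
    ∑ d, u i d = ∑ d, u c0 d := by
  -- the relation in scalar form
  have Fq : ∀ β : Fin m → Fin n,
      (∑ γ : Fin m → Fin n,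
        if labelsMatch q (fun a => a.elim0) γ then pfwd u β γ else 0)
        = if labelsMatch q (fun a => a.elim0) β then 1 else 0 := by
    intro β
    have h := hq (fun a => a.elim0) β
    rw [Fintype.sum_unique] at h
    have hd : (default : Fin 0 → Fin n) = fun a => a.elim0 := Subsingleton.elim _ _
    rw [hd] at h
    simp only [List.ofFn_zero, List.prod_nil] at h
    simpa [pfwd] using h.symm
  -- compatibility is insensitive to the value at the singleton
  have hcpt : ∀ β β' : Fin m → Fin n, (∀ x : Fin m, x ≠ τ → β x = β' x) →
      (labelsMatch q (fun a => a.elim0) β ↔ labelsMatch q (fun a => a.elim0) β') := by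
    have key : ∀ β β' : Fin m → Fin n, (∀ x, x ≠ τ → β x = β' x) →
        labelsMatch q (fun a => a.elim0) β → labelsMatch q (fun a => a.elim0) β' := by
      intro β β' hagree hm x y hxy
      obtain (a | b) := x
      · exact a.elim0
      obtain (a | b') := y
      · exact a.elim0
      by_cases hb : b = τ
      · subst hb
        have h1 := hτ _ hxy
        cases h1
        rfl
      · by_cases hb' : b' = τ
        · exfalso
          subst hb'
          exact hb (Sum.inr.inj (hτ _ (q.iseqv.symm hxy)))
        · have h1 := hm _ _ hxy
          simp only [Sum.elim_inr] at h1 ⊢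
          rw [← hagree b hb, ← hagree b' hb']
          exact h1
    intro β β' h
    exact ⟨key β β' h, key β' β (fun x hx => (h x hx).symm)⟩
  -- split `m` at the position of the singleton
  obtain ⟨t, r, hm', hτv⟩ : ∃ t r, m = t + (1 + r) ∧ (τ : ℕ) = t :=
    ⟨(τ : ℕ), m - (τ : ℕ) - 1, by have := τ.isLt; omega, rfl⟩
  subst hm'
  -- constants are compatible
  have hconstcpt : ∀ c : Fin n,
      labelsMatch q (fun a => a.elim0) (fun _ => c) := by
    intro c x y _
    obtain (a | b) := x
    · exact a.elim0
    obtain (a | b') := y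
    · exact a.elim0
    rfl
  have hjn_cpt : ∀ c0 d : Fin n, labelsMatch q (fun a => a.elim0)
      (jn (fun _ : Fin t => c0) d (fun _ : Fin r => c0)) := by
    intro c0 d
    refine (hcpt _ _ fun x hx => ?_).mpr (hconstcpt c0)
    rw [jn_off (fun _ : Fin t => c0) d c0 (fun _ : Fin r => c0) τ hτv x hx,
      jn_const c0]
  -- the two evaluations of the contracted expression
  have main : ∀ i : Fin n,
      (∑ d, u i d)
        = ∑ βL : Fin t → Fin n, ∑ βR : Fin r → Fin n,
            (if labelsMatch q (fun a => a.elim0) (jn βL c0 βR) then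
              prev u βL (fun _ => c0) * prev u βR (fun _ => c0) else 0) := by
    intro i
    have eval1 : (∑ βL : Fin t → Fin n, ∑ βR : Fin r → Fin n,
        prev u βL (fun _ => c0) *
          ((∑ γ : Fin (t + (1 + r)) → Fin n,
              if labelsMatch q (fun a => a.elim0) γ then pfwd u (jn βL i βR) γ else 0) *
            prev u βR (fun _ => c0)))
        = ∑ βL : Fin t → Fin n, ∑ βR : Fin r → Fin n,
            (if labelsMatch q (fun a => a.elim0) (jn βL c0 βR) then
              prev u βL (fun _ => c0) * prev u βR (fun _ => c0) else 0) := by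
      refine Finset.sum_congr rfl fun βL _ => Finset.sum_congr rfl fun βR _ => ?_
      rw [Fq (jn βL i βR)]
      have hiff : labelsMatch q (fun a => a.elim0) (jn βL i βR)
          ↔ labelsMatch q (fun a => a.elim0) (jn βL c0 βR) :=
        hcpt _ _ (fun x hx => jn_off βL i c0 βR τ hτv x hx)
      by_cases h : labelsMatch q (fun a => a.elim0) (jn βL c0 βR) <;>
        simp [hiff, h]
    have eval2 : (∑ βL : Fin t → Fin n, ∑ βR : Fin r → Fin n,
        prev u βL (fun _ => c0) *
          ((∑ γ : Fin (t + (1 + r)) → Fin n,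
              if labelsMatch q (fun a => a.elim0) γ then pfwd u (jn βL i βR) γ else 0) *
            prev u βR (fun _ => c0)))
        = ∑ d, u i d := by
      calc (∑ βL : Fin t → Fin n, ∑ βR : Fin r → Fin n,
          prev u βL (fun _ => c0) *
            ((∑ γ : Fin (t + (1 + r)) → Fin n,
                if labelsMatch q (fun a => a.elim0) γ then pfwd u (jn βL i βR) γ else 0) *
              prev u βR (fun _ => c0)))
          = ∑ βL : Fin t → Fin n, ∑ βR : Fin r → Fin n,
              ∑ γ : Fin (t + (1 + r)) → Fin n,
              (if labelsMatch q (fun a => a.elim0) γ then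
                prev u βL (fun _ => c0) *
                  (pfwd u (jn βL i βR) γ * prev u βR (fun _ => c0)) else 0) := by
            refine Finset.sum_congr rfl fun βL _ => Finset.sum_congr rfl fun βR _ => ?_
            rw [Finset.sum_mul, Finset.mul_sum]
            refine Finset.sum_congr rfl fun γ _ => ?_
            by_cases h : labelsMatch q (fun a => a.elim0) γ <;> simp [h]
        _ = ∑ γ : Fin (t + (1 + r)) → Fin n, ∑ βL : Fin t → Fin n,
              ∑ βR : Fin r → Fin n,
              (if labelsMatch q (fun a => a.elim0) γ then
                prev u βL (fun _ => c0) *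
                  (pfwd u (jn βL i βR) γ * prev u βR (fun _ => c0)) else 0) := by
            rw [show (∑ βL : Fin t → Fin n, ∑ βR : Fin r → Fin n,
                ∑ γ : Fin (t + (1 + r)) → Fin n,
                (if labelsMatch q (fun a => a.elim0) γ then
                  prev u βL (fun _ => c0) *
                    (pfwd u (jn βL i βR) γ * prev u βR (fun _ => c0)) else 0))
              = ∑ βL : Fin t → Fin n, ∑ γ : Fin (t + (1 + r)) → Fin n,
                ∑ βR : Fin r → Fin n,
                (if labelsMatch q (fun a => a.elim0) γ then
                  prev u βL (fun _ => c0) *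
                    (pfwd u (jn βL i βR) γ * prev u βR (fun _ => c0)) else 0)
              from Finset.sum_congr rfl fun βL _ => Finset.sum_comm]
            exact Finset.sum_comm
        _ = ∑ γL : Fin t → Fin n, ∑ d : Fin n, ∑ γR : Fin r → Fin n,
              ∑ βL : Fin t → Fin n, ∑ βR : Fin r → Fin n,
              (if labelsMatch q (fun a => a.elim0) (jn γL d γR) then
                (prev u βL (fun _ => c0) * pfwd u βL γL) *
                  (u i d * (pfwd u βR γR * prev u βR (fun _ => c0))) else 0) := by
            rw [sum_jn (fun γ : Fin (t + (1 + r)) → Fin n =>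
              ∑ βL : Fin t → Fin n, ∑ βR : Fin r → Fin n,
              (if labelsMatch q (fun a => a.elim0) γ then
                prev u βL (fun _ => c0) *
                  (pfwd u (jn βL i βR) γ * prev u βR (fun _ => c0)) else 0))]
            refine Finset.sum_congr rfl fun γL _ => Finset.sum_congr rfl fun d _ =>
              Finset.sum_congr rfl fun γR _ => Finset.sum_congr rfl fun βL _ =>
              Finset.sum_congr rfl fun βR _ => ?_
            by_cases h : labelsMatch q (fun a => a.elim0) (jn γL d γR) <;>
              simp [h, pfwd_jn, mul_assoc]
        _ = ∑ γL : Fin t → Fin n, ∑ d : Fin n, ∑ γR : Fin r → Fin n,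
              (if labelsMatch q (fun a => a.elim0) (jn γL d γR) then
                (if (fun _ : Fin t => c0) = γL then (1:A) else 0) *
                  (u i d * (if γR = (fun _ : Fin r => c0) then (1:A) else 0)) else 0) := by
            refine Finset.sum_congr rfl fun γL _ => Finset.sum_congr rfl fun d _ =>
              Finset.sum_congr rfl fun γR _ => ?_
            by_cases h : labelsMatch q (fun a => a.elim0) (jn γL d γR)
            · simp only [h, if_true]
              have hfac : (∑ βL : Fin t → Fin n, ∑ βR : Fin r → Fin n,
                  (prev u βL (fun _ => c0) * pfwd u βL γL) *
                    (u i d * (pfwd u βR γR * prev u βR (fun _ => c0))))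
                  = (∑ βL : Fin t → Fin n, prev u βL (fun _ => c0) * pfwd u βL γL) *
                      (u i d * (∑ βR : Fin r → Fin n,
                        pfwd u βR γR * prev u βR (fun _ => c0))) := by
                rw [Finset.sum_mul]
                refine Finset.sum_congr rfl fun βL _ => ?_
                rw [Finset.mul_sum, Finset.mul_sum]
              rw [hfac, teleL u hpair₂ (fun _ => c0) γL, teleR u hpair₂ γR (fun _ => c0)]
            · simp [h]
        _ = ∑ d : Fin n,
              (if labelsMatch q (fun a => a.elim0)
                  (jn (fun _ : Fin t => c0) d (fun _ : Fin r => c0)) then u i d else 0) := by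
            have hite : ∀ (C P Q : Prop) [Decidable C] [Decidable P] [Decidable Q] (K : A),
                (if C then (if P then (1:A) else 0) * (K * (if Q then (1:A) else 0)) else 0)
                  = if P then (if Q then (if C then K else 0) else 0) else 0 := by
              intros C P Q _ _ _ K
              by_cases h1 : C <;> by_cases h2 : P <;> by_cases h3 : Q <;> simp [h1, h2, h3]
            simp only [hite]
            have h1 : ∀ γL : Fin t → Fin n,
                (∑ d : Fin n, ∑ γR : Fin r → Fin n,
                  if (fun _ : Fin t => c0) = γL then
                    (if γR = (fun _ : Fin r => c0) then
                      (if labelsMatch q (fun a => a.elim0) (jn γL d γR) then u i d else 0)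
                     else 0) else 0)
                = (if (fun _ : Fin t => c0) = γL then
                    (∑ d : Fin n, ∑ γR : Fin r → Fin n,
                      if γR = (fun _ : Fin r => c0) then
                        (if labelsMatch q (fun a => a.elim0) (jn γL d γR) then u i d else 0)
                      else 0) else 0) := by
              intro γL
              by_cases h : (fun _ : Fin t => c0) = γL <;> simp [h]
            rw [Finset.sum_congr rfl fun γL _ => h1 γL, Finset.sum_ite_eq]
            simp only [Finset.mem_univ, if_true]
            refine Finset.sum_congr rfl fun d _ => ?_
            rw [Finset.sum_ite_eq']
            simp
        _ = ∑ d, u i d := by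
            refine Finset.sum_congr rfl fun d _ => ?_
            rw [if_pos (hjn_cpt c0 d)]
    rw [← eval2, eval1]
  rw [main i, main c0]
end Lower


/-- Lemma B.4(a) (for a fixed representation, self-adjoint case): given the pair
relations, the double-singleton partition `s ∈ P(1,1)` (two singleton blocks, the
bottom `⊥` of the setoid lattice) does NOT satisfy the relations if and only if every
block of every partition satisfying the relations has at least two points. -/
theorem not_satisfiesRel_doubleSingleton_iff {A : Type*} [CStarAlgebra A] {n : ℕ}
    (u : Fin n → Fin n → A) (hsa : ∀ i j, IsSelfAdjoint (u i j))
    (hpair₁ : ∀ i j, (∑ m, u i m * u j m) = if i = j then (1 : A) else 0)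
    (hpair₂ : ∀ i j, (∑ m, u m i * u m j) = if i = j then (1 : A) else 0) :
    (¬ SatisfiesRel u (⊥ : Partition 1 1)) ↔
      ∀ (k l : ℕ) (p : Partition k l), SatisfiesRel u p →
        ∀ x : Fin k ⊕ Fin l, ∃ y : Fin k ⊕ Fin l, y ≠ x ∧ p.r x y := by
  constructor
  · intro hns k l p hp x
    by_contra hx
    have hsing : ∀ y, p.r x y → y = x := by
      intro y h
      by_contra hne
      exact hx ⟨y, hne, h⟩
    apply hns
    by_cases hn : n = 0
    · subst hn
      intro α _β
      exact (α 0).elim0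
    · obtain ⟨m, q, τ, hq, hτ⟩ := reduce_to_lower u hpair₁ k p hp ⟨x, hsing⟩
      have c0 : Fin n := ⟨0, Nat.pos_of_ne_zero hn⟩
      have hrow : ∀ i : Fin n, ∑ d, u i d = ∑ d, u c0 d :=
        fun i => rowsums_eq u hpair₂ q hq τ hτ c0 i
      have hn' : (n : ℂ) ≠ 0 := Nat.cast_ne_zero.mpr hn
      have hnsmul : (n : ℂ) • ((∑ d, u c0 d) * (∑ d, u c0 d)) = (n : ℂ) • (1 : A) := by
        have h1 : ∑ _i : Fin n, (∑ d, u c0 d) * (∑ d, u c0 d)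
            = (n : ℂ) • ((∑ d, u c0 d) * (∑ d, u c0 d)) := by
          rw [Finset.sum_const, Finset.card_univ, Fintype.card_fin,
            Nat.cast_smul_eq_nsmul]
        have h2 : ∑ i : Fin n, (∑ c, u i c) * (∑ d, u i d) = (n : ℂ) • (1 : A) := by
          calc ∑ i : Fin n, (∑ c, u i c) * (∑ d, u i d)
              = ∑ i : Fin n, ∑ c : Fin n, ∑ d : Fin n, u i c * u i d := by
                refine Finset.sum_congr rfl fun i _ => ?_
                rw [Finset.sum_mul_sum]
            _ = ∑ c : Fin n, ∑ d : Fin n, ∑ i : Fin n, u i c * u i d := by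
                rw [Finset.sum_comm]
                exact Finset.sum_congr rfl fun c _ => Finset.sum_comm
            _ = ∑ c : Fin n, ∑ d : Fin n, (if c = d then (1:A) else 0) := by
                exact Finset.sum_congr rfl fun c _ =>
                  Finset.sum_congr rfl fun d _ => hpair₂ c d
            _ = ∑ _c : Fin n, (1:A) := by
                refine Finset.sum_congr rfl fun c _ => ?_
                rw [Finset.sum_ite_eq]; simp
            _ = (n : ℂ) • (1 : A) := by
                rw [Finset.sum_const, Finset.card_univ, Fintype.card_fin,
                  Nat.cast_smul_eq_nsmul]
        rw [← h1, ← h2]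
        refine Finset.sum_congr rfl fun i _ => ?_
        rw [hrow i]
      have hSS : (∑ d, u c0 d) * (∑ d, u c0 d) = 1 := by
        calc (∑ d, u c0 d) * (∑ d, u c0 d)
            = (n:ℂ)⁻¹ • ((n:ℂ) • ((∑ d, u c0 d) * (∑ d, u c0 d))) :=
              (inv_smul_smul₀ hn' _).symm
          _ = (n:ℂ)⁻¹ • ((n:ℂ) • (1:A)) := by rw [hnsmul]
          _ = 1 := inv_smul_smul₀ hn' _
      have hTS : ∀ j, (∑ c, u c j) * (∑ d, u c0 d) = 1 := by
        intro j
        calc (∑ c, u c j) * (∑ d, u c0 d) = ∑ c, u c j * (∑ d, u c0 d) := by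
              rw [Finset.sum_mul]
          _ = ∑ c : Fin n, ∑ d : Fin n, u c j * u c d := by
              refine Finset.sum_congr rfl fun c _ => ?_
              rw [← hrow c, Finset.mul_sum]
          _ = ∑ d : Fin n, ∑ c : Fin n, u c j * u c d := Finset.sum_comm
          _ = ∑ d : Fin n, (if j = d then (1:A) else 0) :=
              Finset.sum_congr rfl fun d _ => hpair₂ j d
          _ = 1 := by rw [Finset.sum_ite_eq]; simp
      have hcol : ∀ j, (∑ c, u c j) = ∑ d, u c0 d := by
        intro j
        calc (∑ c, u c j) = (∑ c, u c j) * ((∑ d, u c0 d) * (∑ d, u c0 d)) := by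
              rw [hSS, mul_one]
          _ = ((∑ c, u c j) * (∑ d, u c0 d)) * (∑ d, u c0 d) := by rw [mul_assoc]
          _ = ∑ d, u c0 d := by rw [hTS j, one_mul]
      intro α β
      show (∑ γ : Fin 1 → Fin n,
            if labelsMatch (⊥ : Partition 1 1) γ β then pfwd u γ α else 0)
        = ∑ γ' : Fin 1 → Fin n,
            if labelsMatch (⊥ : Partition 1 1) α γ' then pfwd u β γ' else 0
      have hbot : ∀ (a b : Fin 1 → Fin n), labelsMatch (⊥ : Partition 1 1) a b := by
        intro a b z y hxy
        have hxy' : z = y := by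
          rwa [show ((⊥ : Partition 1 1).r) = (· = ·) from Setoid.bot_def] at hxy
        rw [hxy']
      have hp1 : ∀ (a b : Fin 1 → Fin n), pfwd u a b = u (a 0) (b 0) := by
        intro a b; simp [pfwd, List.ofFn_succ]
      calc (∑ γ : Fin 1 → Fin n,
            if labelsMatch (⊥ : Partition 1 1) γ β then pfwd u γ α else 0)
          = ∑ γ : Fin 1 → Fin n, u (γ 0) (α 0) := by
            refine Finset.sum_congr rfl fun γ _ => ?_
            rw [if_pos (hbot γ β), hp1]
        _ = ∑ c : Fin n, u c (α 0) :=
            (Equiv.sum_comp (Equiv.funUnique (Fin 1) (Fin n)).symm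
              (fun γ : Fin 1 → Fin n => u (γ 0) (α 0))).symm
        _ = ∑ d, u c0 d := hcol (α 0)
        _ = ∑ d : Fin n, u (β 0) d := (hrow (β 0)).symm
        _ = ∑ γ' : Fin 1 → Fin n, u (β 0) (γ' 0) :=
            Equiv.sum_comp (Equiv.funUnique (Fin 1) (Fin n)).symm
              (fun γ' : Fin 1 → Fin n => u (β 0) (γ' 0))
        _ = ∑ γ' : Fin 1 → Fin n,
              (if labelsMatch (⊥ : Partition 1 1) α γ' then pfwd u β γ' else 0) := by
            refine Finset.sum_congr rfl fun γ' _ => ?_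
            rw [if_pos (hbot α γ'), hp1]
  · intro h hs
    obtain ⟨y, hy, hr⟩ := h 1 1 ⊥ hs (Sum.inl 0)
    apply hy
    have hr' : (Sum.inl 0 : Fin 1 ⊕ Fin 1) = y := by
      rwa [show ((⊥ : Partition 1 1).r) = (· = ·) from Setoid.bot_def] at hr
    exact hr'.symm

end PartitionCstar
end

section
/- (Non-unital tensor closure, Section 3.2.4) Let A be a (not necessarily unital) C*-algebra, P_0 ∈ A a projection, and u_{ij} ∈ A (1 ≤ i,j ≤ n) self-adjoint elements. Let p ∈ P(k,l) and q ∈ P(k',l') be partitions and suppose the non-unital relations R(p) and R(q) hold. Then the non-unital relations R(p⊗q) hold, where p⊗q ∈ P(k+k', l+l') is the tensor product of p and q. -/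
open scoped Classical

namespace PartitionCstar

section auxTensor
variable {A : Type*} [NonUnitalRing A]

lemma foldl_mul_add' (x y : A) (L : List A) :
    L.foldl (· * ·) (x + y) = L.foldl (· * ·) x + L.foldl (· * ·) y := by
  induction L generalizing x y with
  | nil => rfl
  | cons a L ih => simp only [List.foldl_cons, add_mul, ih]

lemma foldl_mul_zero' (L : List A) : L.foldl (· * ·) (0 : A) = 0 := by
  induction L with
  | nil => rfl
  | cons a L ih => simp only [List.foldl_cons, zero_mul, ih]

lemma foldr_mul_add' (x y : A) (L : List A) :
    L.foldr (· * ·) (x + y) = L.foldr (· * ·) x + L.foldr (· * ·) y := by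
  induction L with
  | nil => rfl
  | cons a L ih => simp only [List.foldr_cons, ih, mul_add]

lemma foldr_mul_zero' (L : List A) : L.foldr (· * ·) (0 : A) = 0 := by
  induction L with
  | nil => rfl
  | cons a L ih => simp only [List.foldr_cons, ih, mul_zero]

/-- `foldl (· * ·)` as an additive monoid hom in the initial value. -/
def foldlHom (L : List A) : A →+ A where
  toFun x := L.foldl (· * ·) x
  map_zero' := foldl_mul_zero' L
  map_add' x y := foldl_mul_add' x y L

/-- `foldr (· * ·)` as an additive monoid hom in the initial value. -/
def foldrHom (L : List A) : A →+ A where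
  toFun x := L.foldr (· * ·) x
  map_zero' := foldr_mul_zero' L
  map_add' x y := foldr_mul_add' x y L

lemma foldl_mul_mul' (a x : A) (L : List A) :
    L.foldl (· * ·) (a * x) = a * L.foldl (· * ·) x := by
  induction L generalizing x with
  | nil => rfl
  | cons b L ih => simp only [List.foldl_cons, mul_assoc, ih]

lemma foldl_foldr' (x : A) (L L₂ : List A) :
    L₂.foldl (· * ·) (L.foldr (· * ·) x) = L.foldr (· * ·) (L₂.foldl (· * ·) x) := by
  induction L with
  | nil => rfl
  | cons a L ih => simp only [List.foldr_cons, foldl_mul_mul', ih]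

end auxTensor

lemma tensorEquiv_symm_inl {k l k' l' : ℕ} (x : Fin k ⊕ Fin l) :
    (tensorEquiv k l k' l').symm (Sum.inl x) =
      Sum.map (Fin.castAdd k') (Fin.castAdd l') x := by
  rw [Equiv.symm_apply_eq]
  cases x <;>
    simp [tensorEquiv, finSumFinEquiv_symm_apply_castAdd]

lemma tensorEquiv_symm_inr {k l k' l' : ℕ} (x : Fin k' ⊕ Fin l') :
    (tensorEquiv k l k' l').symm (Sum.inr x) =
      Sum.map (Fin.natAdd k) (Fin.natAdd l) x := by
  rw [Equiv.symm_apply_eq]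
  cases x <;>
    simp [tensorEquiv, finSumFinEquiv_symm_apply_natAdd]

lemma foldl_sum' {A : Type*} [NonUnitalRing A] {ι : Type*} (s : Finset ι) (f : ι → A)
    (L : List A) :
    L.foldl (· * ·) (∑ i ∈ s, f i) = ∑ i ∈ s, L.foldl (· * ·) (f i) :=
  map_sum (foldlHom L) f s

lemma foldr_sum' {A : Type*} [NonUnitalRing A] {ι : Type*} (s : Finset ι) (f : ι → A)
    (L : List A) :
    L.foldr (· * ·) (∑ i ∈ s, f i) = ∑ i ∈ s, L.foldr (· * ·) (f i) :=
  map_sum (foldrHom L) f s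

lemma foldl_ite' {A : Type*} [NonUnitalRing A] (P : Prop) [Decidable P] (x : A) (L : List A) :
    L.foldl (· * ·) (if P then x else 0) = if P then L.foldl (· * ·) x else 0 := by
  split <;> simp [foldl_mul_zero']

lemma foldr_ite' {A : Type*} [NonUnitalRing A] (P : Prop) [Decidable P] (x : A) (L : List A) :
    L.foldr (· * ·) (if P then x else 0) = if P then L.foldr (· * ·) x else 0 := by
  split <;> simp [foldr_mul_zero']

lemma labelsMatch_tensor {n k l k' l' : ℕ} (p : Partition k l) (q : Partition k' l')
    (γ : Fin (k + k') → Fin n) (β : Fin (l + l') → Fin n) :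
    labelsMatch (tensor p q) γ β ↔
      labelsMatch p (γ ∘ Fin.castAdd k') (β ∘ Fin.castAdd l') ∧
        labelsMatch q (γ ∘ Fin.natAdd k) (β ∘ Fin.natAdd l) := by
  have elimL : ∀ x : Fin k ⊕ Fin l,
      Sum.elim γ β ((tensorEquiv k l k' l').symm (Sum.inl x)) =
        Sum.elim (γ ∘ Fin.castAdd k') (β ∘ Fin.castAdd l') x := by
    intro x; rw [tensorEquiv_symm_inl]; cases x <;> rfl
  have elimR : ∀ x : Fin k' ⊕ Fin l',
      Sum.elim γ β ((tensorEquiv k l k' l').symm (Sum.inr x)) =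
        Sum.elim (γ ∘ Fin.natAdd k) (β ∘ Fin.natAdd l) x := by
    intro x; rw [tensorEquiv_symm_inr]; cases x <;> rfl
  constructor
  · intro h
    constructor
    · intro x y hxy
      have := h ((tensorEquiv k l k' l').symm (Sum.inl x))
        ((tensorEquiv k l k' l').symm (Sum.inl y)) ?_
      · rwa [elimL, elimL] at this
      · show (sumPartition p q).r _ _
        simp only [Equiv.apply_symm_apply]
        exact Sum.LiftRel.inl hxy
    · intro x y hxy
      have := h ((tensorEquiv k l k' l').symm (Sum.inr x))
        ((tensorEquiv k l k' l').symm (Sum.inr y)) ?_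
      · rwa [elimR, elimR] at this
      · show (sumPartition p q).r _ _
        simp only [Equiv.apply_symm_apply]
        exact Sum.LiftRel.inr hxy
  · rintro ⟨h1, h2⟩ x y hxy
    have hxy' : (sumPartition p q).r (tensorEquiv k l k' l' x) (tensorEquiv k l k' l' y) := hxy
    have hx : x = (tensorEquiv k l k' l').symm (tensorEquiv k l k' l' x) :=
      (Equiv.symm_apply_apply _ _).symm
    have hy : y = (tensorEquiv k l k' l').symm (tensorEquiv k l k' l' y) :=
      (Equiv.symm_apply_apply _ _).symm
    rw [hx, hy]
    generalize tensorEquiv k l k' l' x = a at hxy' ⊢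
    generalize tensorEquiv k l k' l' y = b at hxy' ⊢
    cases hxy' with
    | inl h => rw [elimL, elimL]; exact h1 _ _ h
    | inr h => rw [elimR, elimR]; exact h2 _ _ h

/-- The splitting equivalence for index functions. -/
def splitEquiv (n a b : ℕ) : ((Fin a → Fin n) × (Fin b → Fin n)) ≃ (Fin (a + b) → Fin n) :=
  (Equiv.sumArrowEquivProdArrow (Fin a) (Fin b) (Fin n)).symm.trans
    (Equiv.arrowCongr finSumFinEquiv (Equiv.refl _))

lemma splitEquiv_castAdd {n a b : ℕ} (γ₁ : Fin a → Fin n) (γ₂ : Fin b → Fin n) (i : Fin a) :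
    splitEquiv n a b (γ₁, γ₂) (Fin.castAdd b i) = γ₁ i := by
  simp [splitEquiv, Equiv.arrowCongr, Equiv.sumArrowEquivProdArrow,
    finSumFinEquiv_symm_apply_castAdd]

lemma splitEquiv_natAdd {n a b : ℕ} (γ₁ : Fin a → Fin n) (γ₂ : Fin b → Fin n) (j : Fin b) :
    splitEquiv n a b (γ₁, γ₂) (Fin.natAdd a j) = γ₂ j := by
  simp [splitEquiv, Equiv.arrowCongr, Equiv.sumArrowEquivProdArrow,
    finSumFinEquiv_symm_apply_natAdd]

/-- Section 3.2.4 (non-unital tensor closure): if the non-unital relations `R(p)` and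
`R(q)` hold relative to a projection `P₀`, then the non-unital relations `R(p⊗q)` hold
as well. -/
theorem satisfiesRelNU_tensor {A : Type*} [NonUnitalCStarAlgebra A] {n : ℕ}
    (P₀ : A) (hP₀sa : IsSelfAdjoint P₀) (hP₀idem : P₀ * P₀ = P₀)
    (u : Fin n → Fin n → A) (hsa : ∀ i j, IsSelfAdjoint (u i j))
    {k l k' l' : ℕ} (p : Partition k l) (q : Partition k' l')
    (hp : SatisfiesRelNU P₀ u p) (hq : SatisfiesRelNU P₀ u q) :
    SatisfiesRelNU P₀ u (tensor p q) := by
  classical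
  intro α β
  have hcK : ∀ (γ₁ : Fin k → Fin n) (γ₂ : Fin k' → Fin n),
      splitEquiv n k k' (γ₁, γ₂) ∘ Fin.castAdd k' = γ₁ := fun γ₁ γ₂ =>
    funext fun i => splitEquiv_castAdd γ₁ γ₂ i
  have hnK : ∀ (γ₁ : Fin k → Fin n) (γ₂ : Fin k' → Fin n),
      splitEquiv n k k' (γ₁, γ₂) ∘ Fin.natAdd k = γ₂ := fun γ₁ γ₂ =>
    funext fun i => splitEquiv_natAdd γ₁ γ₂ i
  have hcL : ∀ (δ₁ : Fin l → Fin n) (δ₂ : Fin l' → Fin n),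
      splitEquiv n l l' (δ₁, δ₂) ∘ Fin.castAdd l' = δ₁ := fun δ₁ δ₂ =>
    funext fun i => splitEquiv_castAdd δ₁ δ₂ i
  have hnL : ∀ (δ₁ : Fin l → Fin n) (δ₂ : Fin l' → Fin n),
      splitEquiv n l l' (δ₁, δ₂) ∘ Fin.natAdd l = δ₂ := fun δ₁ δ₂ =>
    funext fun i => splitEquiv_natAdd δ₁ δ₂ i
  calc
    (∑ γ : Fin (k + k') → Fin n,
        if labelsMatch (tensor p q) γ β then
          (List.ofFn fun s => u (γ s) (α s)).foldl (· * ·) P₀ else 0)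
      = ∑ x : (Fin k → Fin n) × (Fin k' → Fin n),
          if labelsMatch (tensor p q) (splitEquiv n k k' x) β then
            (List.ofFn fun s => u (splitEquiv n k k' x s) (α s)).foldl (· * ·) P₀ else 0 :=
        (Equiv.sum_comp (splitEquiv n k k') _).symm
    _ = ∑ γ₁ : Fin k → Fin n, ∑ γ₂ : Fin k' → Fin n,
          if labelsMatch (tensor p q) (splitEquiv n k k' (γ₁, γ₂)) β then
            (List.ofFn fun s => u (splitEquiv n k k' (γ₁, γ₂) s) (α s)).foldl (· * ·) P₀
          else 0 := Fintype.sum_prod_type _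
    _ = ∑ γ₁ : Fin k → Fin n, ∑ γ₂ : Fin k' → Fin n,
          if labelsMatch p γ₁ (β ∘ Fin.castAdd l') ∧ labelsMatch q γ₂ (β ∘ Fin.natAdd l) then
            (List.ofFn fun s : Fin k' =>
                u (γ₂ s) ((α ∘ Fin.natAdd k) s)).foldl (· * ·)
              ((List.ofFn fun s : Fin k =>
                  u (γ₁ s) ((α ∘ Fin.castAdd k') s)).foldl (· * ·) P₀)
          else 0 := by
        refine Finset.sum_congr rfl fun γ₁ _ => Finset.sum_congr rfl fun γ₂ _ => ?_
        rw [labelsMatch_tensor, hcK, hnK, List.ofFn_add, List.foldl_append]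
        simp only [show ∀ (h : k ≤ k + k') (i : Fin k), Fin.castLE h i = Fin.castAdd k' i from fun _ _ => rfl]
        simp only [splitEquiv_castAdd, splitEquiv_natAdd, Function.comp_apply]
    _ = ∑ γ₂ : Fin k' → Fin n, ∑ γ₁ : Fin k → Fin n,
          if labelsMatch p γ₁ (β ∘ Fin.castAdd l') ∧ labelsMatch q γ₂ (β ∘ Fin.natAdd l) then
            (List.ofFn fun s : Fin k' =>
                u (γ₂ s) ((α ∘ Fin.natAdd k) s)).foldl (· * ·)
              ((List.ofFn fun s : Fin k =>
                  u (γ₁ s) ((α ∘ Fin.castAdd k') s)).foldl (· * ·) P₀)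
          else 0 := Finset.sum_comm
    _ = ∑ γ₂ : Fin k' → Fin n,
          if labelsMatch q γ₂ (β ∘ Fin.natAdd l) then
            (List.ofFn fun s : Fin k' =>
                u (γ₂ s) ((α ∘ Fin.natAdd k) s)).foldl (· * ·)
              (∑ γ₁ : Fin k → Fin n,
                if labelsMatch p γ₁ (β ∘ Fin.castAdd l') then
                  (List.ofFn fun s : Fin k =>
                      u (γ₁ s) ((α ∘ Fin.castAdd k') s)).foldl (· * ·) P₀
                else 0)
          else 0 := by
        refine Finset.sum_congr rfl fun γ₂ _ => ?_
        by_cases hMq : labelsMatch q γ₂ (β ∘ Fin.natAdd l)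
        · simp only [hMq, and_true, if_true, foldl_sum', foldl_ite']
        · simp [hMq]
    _ = ∑ γ₂ : Fin k' → Fin n,
          if labelsMatch q γ₂ (β ∘ Fin.natAdd l) then
            (List.ofFn fun s : Fin k' =>
                u (γ₂ s) ((α ∘ Fin.natAdd k) s)).foldl (· * ·)
              (∑ δ₁ : Fin l → Fin n,
                if labelsMatch p (α ∘ Fin.castAdd k') δ₁ then
                  (List.ofFn fun t : Fin l =>
                      u ((β ∘ Fin.castAdd l') t) (δ₁ t)).foldr (· * ·) P₀
                else 0)
          else 0 := by
        rw [hp (α ∘ Fin.castAdd k') (β ∘ Fin.castAdd l')]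
    _ = ∑ γ₂ : Fin k' → Fin n, ∑ δ₁ : Fin l → Fin n,
          if labelsMatch q γ₂ (β ∘ Fin.natAdd l) ∧ labelsMatch p (α ∘ Fin.castAdd k') δ₁ then
            (List.ofFn fun t : Fin l =>
                u ((β ∘ Fin.castAdd l') t) (δ₁ t)).foldr (· * ·)
              ((List.ofFn fun s : Fin k' =>
                  u (γ₂ s) ((α ∘ Fin.natAdd k) s)).foldl (· * ·) P₀)
          else 0 := by
        refine Finset.sum_congr rfl fun γ₂ _ => ?_
        by_cases hMq : labelsMatch q γ₂ (β ∘ Fin.natAdd l)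
        · simp only [hMq, true_and, if_true, foldl_sum', foldl_ite']
          refine Finset.sum_congr rfl fun δ₁ _ => ?_
          by_cases hMp : labelsMatch p (α ∘ Fin.castAdd k') δ₁ <;>
            simp [hMp, foldl_foldr']
        · simp [hMq]
    _ = ∑ δ₁ : Fin l → Fin n, ∑ γ₂ : Fin k' → Fin n,
          if labelsMatch q γ₂ (β ∘ Fin.natAdd l) ∧ labelsMatch p (α ∘ Fin.castAdd k') δ₁ then
            (List.ofFn fun t : Fin l =>
                u ((β ∘ Fin.castAdd l') t) (δ₁ t)).foldr (· * ·)
              ((List.ofFn fun s : Fin k' =>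
                  u (γ₂ s) ((α ∘ Fin.natAdd k) s)).foldl (· * ·) P₀)
          else 0 := Finset.sum_comm
    _ = ∑ δ₁ : Fin l → Fin n,
          if labelsMatch p (α ∘ Fin.castAdd k') δ₁ then
            (List.ofFn fun t : Fin l =>
                u ((β ∘ Fin.castAdd l') t) (δ₁ t)).foldr (· * ·)
              (∑ γ₂ : Fin k' → Fin n,
                if labelsMatch q γ₂ (β ∘ Fin.natAdd l) then
                  (List.ofFn fun s : Fin k' =>
                      u (γ₂ s) ((α ∘ Fin.natAdd k) s)).foldl (· * ·) P₀
                else 0)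
          else 0 := by
        refine Finset.sum_congr rfl fun δ₁ _ => ?_
        by_cases hMp : labelsMatch p (α ∘ Fin.castAdd k') δ₁
        · simp only [hMp, and_true, if_true, foldr_sum', foldr_ite']
        · simp [hMp]
    _ = ∑ δ₁ : Fin l → Fin n,
          if labelsMatch p (α ∘ Fin.castAdd k') δ₁ then
            (List.ofFn fun t : Fin l =>
                u ((β ∘ Fin.castAdd l') t) (δ₁ t)).foldr (· * ·)
              (∑ δ₂ : Fin l' → Fin n,
                if labelsMatch q (α ∘ Fin.natAdd k) δ₂ then
                  (List.ofFn fun t : Fin l' =>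
                      u ((β ∘ Fin.natAdd l) t) (δ₂ t)).foldr (· * ·) P₀
                else 0)
          else 0 := by
        rw [hq (α ∘ Fin.natAdd k) (β ∘ Fin.natAdd l)]
    _ = ∑ δ₁ : Fin l → Fin n, ∑ δ₂ : Fin l' → Fin n,
          if labelsMatch p (α ∘ Fin.castAdd k') δ₁ ∧ labelsMatch q (α ∘ Fin.natAdd k) δ₂ then
            (List.ofFn fun t : Fin l =>
                u ((β ∘ Fin.castAdd l') t) (δ₁ t)).foldr (· * ·)
              ((List.ofFn fun t : Fin l' =>
                  u ((β ∘ Fin.natAdd l) t) (δ₂ t)).foldr (· * ·) P₀)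
          else 0 := by
        refine Finset.sum_congr rfl fun δ₁ _ => ?_
        by_cases hMp : labelsMatch p (α ∘ Fin.castAdd k') δ₁
        · simp only [hMp, true_and, if_true, foldr_sum', foldr_ite']
        · simp [hMp]
    _ = ∑ x : (Fin l → Fin n) × (Fin l' → Fin n),
          if labelsMatch (tensor p q) α (splitEquiv n l l' x) then
            (List.ofFn fun t => u (β t) (splitEquiv n l l' x t)).foldr (· * ·) P₀ else 0 := by
        rw [Fintype.sum_prod_type]
        refine Finset.sum_congr rfl fun δ₁ _ => Finset.sum_congr rfl fun δ₂ _ => ?_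
        rw [labelsMatch_tensor, hcL, hnL, List.ofFn_add, List.foldr_append]
        simp only [show ∀ (h : l ≤ l + l') (i : Fin l), Fin.castLE h i = Fin.castAdd l' i from fun _ _ => rfl]
        simp only [splitEquiv_castAdd, splitEquiv_natAdd, Function.comp_apply]
    _ = ∑ γ' : Fin (l + l') → Fin n,
          if labelsMatch (tensor p q) α γ' then
            (List.ofFn fun t => u (β t) (γ' t)).foldr (· * ·) P₀ else 0 :=
        Equiv.sum_comp (splitEquiv n l l') fun γ' =>
          if labelsMatch (tensor p q) α γ' then
            (List.ofFn fun t => u (β t) (γ' t)).foldr (· * ·) P₀ else 0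

end PartitionCstar
end
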